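/- arXiv:2206.10047 — 4 statements merged into one kernel-verified Lean document; each statement's English description precedes it below -/
import Mathlib

section
/- In the quasi-staircase subshift: suppose z ≥ 1 and the word 0 1^z 0 belongs to L. Then there exist unique n ≥ 1 and 0 ≤ i < b_n with z = c_n + i. Moreover, 0 1^{c_n+i} 0 is not a subword of B_m for any m ≤ n, and for every x ∈ X and t ∈ ℤ with x_{[t, t+c_n+i+2)} = 0 1^{c_n+i} 0, there exists 1 ≤ q ≤ a_n such that x restricted to the interval of the appropriate length ending at position t+c_n+i+2 equals the word 1^{c_{n+1}} (∏_{j=0}^{i-1} (B_n 1^{c_n+j})^{a_n}) (B_n 1^{c_n+i})^q 0, where the product over an empty range is the empty word. -/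
open Filter MeasureTheory
open scoped ENNReal

/-- `n`-fold concatenation (power) of a word. -/
def wpow {α : Type*} (v : List α) (n : ℕ) : List α := (List.replicate n v).flatten

/-- The word `1^k` over the alphabet `{0,1}` (with `0 = false`, `1 = true`). -/
def ones (k : ℕ) : List Bool := List.replicate k true

/-- The left shift on biinfinite sequences. -/
def shift {A : Type*} (x : ℤ → A) : ℤ → A := fun n => x (n + 1)

/-- The word `x_{[s, s+len)}` read off a biinfinite sequence. -/
def readWord {A : Type*} (x : ℤ → A) (s : ℤ) (len : ℕ) : List A :=
  (List.range len).map (fun i => x (s + (i : ℤ)))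

/-- A finite word occurs (as a consecutive subword) in a biinfinite sequence. -/
def occursIn {A : Type*} (w : List A) (x : ℤ → A) : Prop :=
  ∃ k : ℤ, readWord x k w.length = w

/-- The quasi-staircase words: `B 1 = 0` and
`B (n+1) = (∏_{i=0}^{b n - 1} (B n · 1^{c n + i})^{a n}) · B n`. -/
def qsB (a b c : ℕ → ℕ) : ℕ → List Bool
  | 0 => []
  | 1 => [false]
  | (n+2) =>
      ((List.range (b (n+1))).map
        (fun i => wpow (qsB a b c (n+1) ++ ones (c (n+1) + i)) (a (n+1)))).flatten
        ++ qsB a b c (n+1)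

/-- The language of the quasi-staircase subshift: all subwords of some `B n`, `n ≥ 1`. -/
def qsL (a b c : ℕ → ℕ) : Set (List Bool) :=
  {w | ∃ n, 1 ≤ n ∧ w <:+: qsB a b c n}

/-- The quasi-staircase subshift: biinfinite sequences all of whose finite subwords
lie in the language. -/
def qsX (a b c : ℕ → ℕ) : Set (ℤ → Bool) :=
  {x | ∀ w : List Bool, occursIn w x → w ∈ qsL a b c}

/-- Right-special words of the quasi-staircase subshift: `w`, `w0` and `w1` all lie
in the language. -/
def RS (a b c : ℕ → ℕ) (w : List Bool) : Prop :=
  w ∈ qsL a b c ∧ (w ++ [false]) ∈ qsL a b c ∧ (w ++ [true]) ∈ qsL a b c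

/-- The tail length `z(w)`: the number of `1`s at the end of `w`. -/
def ztail (w : List Bool) : ℕ := (w.reverse.takeWhile id).length

/-- The level-`n` generating words: right-special words containing a `0` whose tail
length lies in `[c n, c (n+1))`. -/
def Wn (a b c : ℕ → ℕ) (n : ℕ) : Set (List Bool) :=
  {w | RS a b c w ∧ false ∈ w ∧ c n ≤ ztail w ∧ ztail w < c (n+1)}

/-- The word complexity of the quasi-staircase subshift. -/
noncomputable def cplx (a b c : ℕ → ℕ) (q : ℕ) : ℕ :=
  Set.ncard {w | w ∈ qsL a b c ∧ w.length = q}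

/-- The level-`n` complexity functions. -/
noncomputable def cplxn (a b c : ℕ → ℕ) (n q : ℕ) : ℕ :=
  Set.ncard {w | w ∈ Wn a b c n ∧ w.length < q}

/-- The height sequence of the quasi-staircase: `h n = |B n|`. -/
def qsh (a b c : ℕ → ℕ) : ℕ → ℕ
  | 0 => 0
  | 1 => 1
  | (n+2) => (a (n+1) * b (n+1) + 1) * qsh a b c (n+1)
      + a (n+1) * b (n+1) * c (n+1) + a (n+1) * b (n+1) * (b (n+1) - 1) / 2

/-- The post-productive sequence `m n = a n * h n + (a n + 1) * (c n + b n - 1)`. -/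
def qsm (a b c : ℕ → ℕ) (n : ℕ) : ℕ :=
  a n * qsh a b c n + (a n + 1) * (c n + b n - 1)

/-- The standing quasi-staircase hypotheses: `a`, `b`, `c` are nondecreasing sequences
of positive integers (for `n ≥ 1`) tending to infinity, with `c 1 ≥ 1` and
`c (n+1) ≥ c n + b n` for all `n ≥ 1`. -/
def QShyp (a b c : ℕ → ℕ) : Prop :=
  (∀ n, 1 ≤ n → 1 ≤ a n ∧ a n ≤ a (n+1)) ∧ Tendsto a atTop atTop ∧
  (∀ n, 1 ≤ n → 1 ≤ b n ∧ b n ≤ b (n+1)) ∧ Tendsto b atTop atTop ∧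
  (∀ n, 1 ≤ n → 1 ≤ c n ∧ c n ≤ c (n+1)) ∧ Tendsto c atTop atTop ∧
  (∀ n, 1 ≤ n → c n + b n ≤ c (n+1))

/-- The word `1^{c (n+1)} (∏_{j=0}^{i-1} (B n 1^{c n + j})^{a n}) (B n 1^{c n + i})^q 0`
of which every occurrence of `0 1^{c n + i} 0` is a suffix. -/
def qsOccWord (a b c : ℕ → ℕ) (n i q : ℕ) : List Bool :=
  ones (c (n+1)) ++
    ((List.range i).map (fun j => wpow (qsB a b c n ++ ones (c n + j)) (a n))).flatten ++
    wpow (qsB a b c n ++ ones (c n + i)) q ++ [false]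

-- occurrence word
def occw (z : ℕ) : List Bool := [false] ++ ones z ++ [false]

@[simp] lemma occw_length (z : ℕ) : (occw z).length = z + 2 := by
  simp [occw, ones]

@[simp] lemma ones_length (k : ℕ) : (ones k).length = k := by simp [ones]

lemma wpow_succ {α : Type*} (v : List α) (q : ℕ) : wpow v (q+1) = wpow v q ++ v := by
  simp [wpow, List.replicate_succ']

@[simp] lemma wpow_zero {α : Type*} (v : List α) : wpow v 0 = [] := rfl

@[simp] lemma wpow_length {α : Type*} (v : List α) (q : ℕ) :
    (wpow v q).length = q * v.length := by
  induction q with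
  | zero => simp
  | succ q ih => rw [wpow_succ]; simp [ih]; ring

-- flatten of flatten helper
lemma flatten_flatten_map {α β : Type*} (g : α → List β) :
    ∀ (Ms : List (List α)),
      ((Ms.flatten).map g).flatten = (Ms.map (fun l => (l.map g).flatten)).flatten := by
  intro Ms
  induction Ms with
  | nil => rfl
  | cons l Ms ih => simp only [List.flatten_cons, List.map_append, List.flatten_append,
      List.map_cons, ih]

-- the staircase separator list
def Mst (a b c : ℕ → ℕ) (n : ℕ) : List ℕ :=
  ((List.range (b n)).map (fun j => List.replicate (a n) (c n + j))).flatten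

lemma wpow_eq_flatten_map {α : Type*} (B : List α) (g : ℕ → List α) (k q : ℕ)
    (h : g k = B) : ((List.replicate q k).map g).flatten = wpow B q := by
  rw [List.map_replicate, h]; rfl

lemma qsB_gform (a b c : ℕ → ℕ) (n : ℕ) :
    qsB a b c (n+2) = ((Mst a b c (n+1)).map
      (fun k => qsB a b c (n+1) ++ ones k)).flatten ++ qsB a b c (n+1) := by
  show ((List.range (b (n+1))).map
        (fun i => wpow (qsB a b c (n+1) ++ ones (c (n+1) + i)) (a (n+1)))).flatten
        ++ qsB a b c (n+1) = _
  rw [Mst, flatten_flatten_map, List.map_map]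
  congr 2
  apply List.map_congr_left
  intro j _
  simp only [Function.comp_apply]
  rw [wpow_eq_flatten_map _ _ _ _ rfl]

lemma mem_Mst {a b c : ℕ → ℕ} {n k : ℕ} (h : k ∈ Mst a b c n) :
    ∃ j, j < b n ∧ k = c n + j := by
  simp only [Mst, List.mem_flatten, List.mem_map] at h
  obtain ⟨l, ⟨j, hj, rfl⟩, hk⟩ := h
  exact ⟨j, List.mem_range.mp hj, (List.eq_of_mem_replicate hk).symm ▸ rfl⟩

-- head of a g-form word
lemma gform_head {B w : List Bool} (hB : B = false :: w) (M : List ℕ) :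
    ∃ r, (M.map (fun k => B ++ ones k)).flatten ++ B = false :: r := by
  cases M with
  | nil => exact ⟨w, by simpa using hB⟩
  | cons k M' =>
      refine ⟨w ++ (ones k ++ ((M'.map (fun k => B ++ ones k)).flatten ++ B)), ?_⟩
    
      simp only [List.map_cons, List.flatten_cons, hB]
      simp

-- basic length facts
lemma qsB_shape (a b c : ℕ → ℕ) :
    ∀ n, 1 ≤ n → (∃ w, qsB a b c n = false :: w) ∧ (∃ w, qsB a b c n = w ++ [false]) := by
  intro n hn
  induction n with
  | zero => omega
  | succ n ih =>
      cases n with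
      | zero => exact ⟨⟨[], rfl⟩, ⟨[], rfl⟩⟩
      | succ m =>
          obtain ⟨⟨w1, hw1⟩, ⟨w2, hw2⟩⟩ := ih (by omega)
          rw [qsB_gform]
          constructor
          · exact gform_head hw1 _
          · exact ⟨((Mst a b c (m+1)).map (fun k => qsB a b c (m+1) ++ ones k)).flatten ++ w2,
              by rw [hw2, List.append_assoc]⟩

-- pointwise values of the occurrence word inside a context
lemma occ_getElem_left {u v : List Bool} (z : ℕ) :
    (u ++ (occw z ++ v))[u.length]? = some false := by
  rw [List.getElem?_append_right (le_refl _)]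
  simp [occw]

lemma occ_getElem_mid {u v : List Bool} {z r : ℕ} (h1 : 1 ≤ r) (h2 : r ≤ z) :
    (u ++ (occw z ++ v))[u.length + r]? = some true := by
  rw [List.getElem?_append_right (by omega)]
  have : u.length + r - u.length = r := by omega
  rw [this, occw, List.append_assoc]
  show (false :: (ones z ++ ([false] ++ v)))[r]? = some true
  cases r with
  | zero => omega
  | succ r' =>
      simp only [List.getElem?_cons_succ]
      rw [List.getElem?_append_left (by simp; omega)]
      simp [ones, List.getElem?_replicate]
      omega

lemma occ_getElem_right {u v : List Bool} (z : ℕ) :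
    (u ++ (occw z ++ v))[u.length + (z + 1)]? = some false := by
  rw [List.getElem?_append_right (by omega)]
  have : u.length + (z + 1) - u.length = z + 1 := by omega
  rw [this, occw, List.append_assoc]
  show (false :: (ones z ++ ([false] ++ v)))[z+1]? = some false
  simp only [List.getElem?_cons_succ]
  rw [List.getElem?_append_right (by simp)]
  simp

/-- Master localization lemma. -/
lemma ML {B w1 w2 : List Bool} (hB1 : B = false :: w1) (hB2 : B = w2 ++ [false])
    (z : ℕ) (hz : 1 ≤ z) :
    ∀ (M : List ℕ) (u v : List Bool),
      u ++ occw z ++ v = (M.map (fun k => B ++ ones k)).flatten ++ B →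
      (∃ M1 M2 u0 v0, M = M1 ++ M2 ∧ u = (M1.map (fun k => B ++ ones k)).flatten ++ u0 ∧
        u0 ++ occw z ++ v0 = B)
      ∨ (∃ M1 M2, M = M1 ++ z :: M2 ∧
          u ++ occw z = (M1.map (fun k => B ++ ones k)).flatten ++ B ++ ones z ++ [false]) := by
  intro M
  induction M with
  | nil =>
      intro u v h
      simp only [List.map_nil, List.flatten_nil, List.nil_append] at h
      exact Or.inl ⟨[], [], u, v, by simp, by simp, h⟩
  | cons k M' ih =>
      intro u v h
      set g : ℕ → List Bool := fun k => B ++ ones k with hg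
      set rest : List Bool := (M'.map g).flatten ++ B with hrest
      have hF : u ++ (occw z ++ v) = (B ++ ones k) ++ rest := by
        rw [← List.append_assoc, h]; simp [hg, hrest, List.append_assoc]
      have hBlen : B.length = w2.length + 1 := by rw [hB2]; simp
      have hrest0 : ∃ r, rest = false :: r := gform_head hB1 M'
      -- the three numeric regimes
      rcases le_or_gt (u.length + (z + 2)) B.length with hin | hmid1
      · -- occurrence inside the first copy of B
        left
        refine ⟨[], k :: M', u, v.take (B.length - (u.length + (z + 2))), by simp, by simp, ?_⟩
        have h1 : ((u ++ occw z) ++ v).take B.length =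
            (u ++ occw z) ++ v.take (B.length - (u ++ occw z).length) := by
          rw [List.take_append, List.take_of_length_le (by simp; omega)]
        have h2 : ((B ++ ones k) ++ rest).take B.length = B := by
          rw [List.append_assoc]; exact List.take_left' rfl
        have := hF
        rw [← List.append_assoc] at this
        rw [← this] at h2
        rw [h1] at h2
        simpa [List.append_assoc, occw_length] using h2
      · rcases le_or_gt (B.length + k) u.length with hrec | hmid2
        · -- occurrence beyond the first chunk: recurse
          have hu : u = (B ++ ones k) ++ u.drop (B.length + k) := by
            have h1 : ((B ++ ones k) ++ rest).take (B.length + k) = B ++ ones k :=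
              List.take_left' (by simp)
            rw [← hF] at h1
            rw [List.take_append, Nat.sub_eq_zero_of_le hrec,
              List.take_zero, List.append_nil] at h1
            conv_lhs => rw [← List.take_append_drop (B.length + k) u]
            rw [h1]
          have hcut : u.drop (B.length + k) ++ occw z ++ v = rest := by
            have h5 := hF
            rw [hu, List.append_assoc] at h5
            have h6 := List.append_cancel_left h5
            rw [← List.append_assoc] at h6
            exact h6
          rcases ih _ _ hcut with ⟨M1, M2, u0, v0, hM, hu0, hocc⟩ | ⟨M1, M2, hM, hocc⟩
          · left
            refine ⟨k :: M1, M2, u0, v0, by simp [hM], ?_, hocc⟩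
            rw [hu, hu0]
            simp [hg, List.append_assoc]
          · right
            refine ⟨k :: M1, M2, by simp [hM], ?_⟩
            rw [hu, List.append_assoc, hocc]
            simp [hg, List.append_assoc]
        · -- middle case: straddling, forces u.length = B.length - 1 and z = k
          have hlen2 : (B ++ ones k).length = B.length + k := by simp
          -- step 1 : u.length < B.length
          have hp1 : u.length < B.length := by
            by_contra hcon
            push_neg at hcon
            have h1 : (u ++ (occw z ++ v))[u.length]? = some false := occ_getElem_left z
            rw [hF, List.getElem?_append_left (by omega),
              List.getElem?_append_right hcon] at h1
            simp [ones, List.getElem?_replicate] at h1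
          -- step 2 : u.length + 1 = B.length
          have hp2 : u.length + 1 = B.length := by
            by_contra hcon
            have h1 : (u ++ (occw z ++ v))[u.length + (B.length - 1 - u.length)]? = some true :=
              occ_getElem_mid (by omega) (by omega)
            have he : u.length + (B.length - 1 - u.length) = w2.length := by omega
            rw [hF, he, List.getElem?_append_left (by omega),
              List.getElem?_append_left (by omega), hB2,
              List.getElem?_append_right (le_refl _)] at h1
            simp at h1
          -- step 3 : k ≤ z
          have hkz : k ≤ z := by
            by_contra hcon
            push_neg at hcon
            have h1 : (u ++ (occw z ++ v))[u.length + (z + 1)]? = some false :=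
              occ_getElem_right z
            have he : u.length + (z + 1) = B.length + z := by omega
            rw [hF, he, List.getElem?_append_left (by omega),
              List.getElem?_append_right (by omega)] at h1
            simp [ones, List.getElem?_replicate] at h1
          -- step 4 : z = k
          have hzk : z = k := by
            by_contra hcon
            have h1 : (u ++ (occw z ++ v))[u.length + (k + 1)]? = some true :=
              occ_getElem_mid (by omega) (by omega)
            have he : u.length + (k + 1) = B.length + k := by omega
            obtain ⟨r, hr⟩ := hrest0
            rw [hF, he, List.getElem?_append_right (by omega), hlen2, Nat.sub_self, hr] at h1
            simp at h1
          -- conclude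
          subst hzk
          right
          refine ⟨[], M', by simp, ?_⟩
          obtain ⟨r, hr⟩ := hrest0
          have htake : ((u ++ occw z) ++ v).take (u.length + (z + 2)) =
              (((B ++ ones z) ++ rest)).take (u.length + (z + 2)) := by
            rw [List.append_assoc, hF]
          rw [List.take_append,
            List.take_of_length_le (by simp), (by simp : (u ++ occw z).length = u.length + (z+2)),
            Nat.sub_self, List.take_zero, List.append_nil] at htake
          have he2 : u.length + (z + 2) = (B ++ ones z).length + 1 := by
            rw [hlen2]; omega
          rw [he2, List.take_append,
            List.take_of_length_le (by omega), Nat.add_sub_cancel_left, hr] at htake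
          rw [htake]
          simp [List.append_assoc]


-- monotonicity from one-step bounds
lemma mono_step {f : ℕ → ℕ} (hf : ∀ n, 1 ≤ n → f n ≤ f (n+1)) :
    ∀ m m', 1 ≤ m → m ≤ m' → f m ≤ f m' := by
  intro m m' h1 h2
  induction m' with
  | zero => omega
  | succ m' ih =>
      rcases Nat.lt_or_ge m (m' + 1) with h | h
      · exact le_trans (ih (by omega)) (hf m' (by omega))
      · have : m = m' + 1 := by omega
        rw [this]

-- interval disjointness
lemma qs_disj {b c : ℕ → ℕ}
    (hc : ∀ n, 1 ≤ n → 1 ≤ c n ∧ c n ≤ c (n+1))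
    (hcb : ∀ n, 1 ≤ n → c n + b n ≤ c (n+1)) :
    ∀ n n' i i', 1 ≤ n → 1 ≤ n' → i < b n → i' < b n' → c n + i = c n' + i' →
      n = n' ∧ i = i' := by
  have key : ∀ n n' (i : ℕ), 1 ≤ n → n < n' → i < b n → c n + i < c n' := by
    intro n n' i h1 h2 h3
    have s1 : c n + b n ≤ c (n+1) := hcb n h1
    have s2 : c (n+1) ≤ c n' := mono_step (fun m hm => (hc m hm).2) (n+1) n' (by omega) (by omega)
    omega
  intro n n' i i' h1 h2 h3 h4 h5
  rcases Nat.lt_trichotomy n n' with h | h | h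
  · have := key n n' i h1 h h3; omega
  · constructor
    · exact h
    · rw [h] at h5; omega
  · have := key n' n i' h2 h h4; omega

/-- Lemma A : any occurrence of `0 1^z 0` in `B N` has `z = c m + i`, `m < N`. -/
lemma occ_infix_qsB (a b c : ℕ → ℕ) :
    ∀ N z, 1 ≤ z → occw z <:+: qsB a b c N →
      ∃ m i, 1 ≤ m ∧ m < N ∧ i < b m ∧ z = c m + i := by
  intro N
  induction N with
  | zero =>
      intro z hz h
      obtain ⟨u, v, huv⟩ := h
      have := congrArg List.length huv
      simp [qsB, occw_length] at this
  | succ N ih =>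
      intro z hz h
      cases N with
      | zero =>
          obtain ⟨u, v, huv⟩ := h
          have := congrArg List.length huv
          simp [qsB, occw_length] at this
          omega
      | succ m =>
          obtain ⟨⟨w1, hw1⟩, ⟨w2, hw2⟩⟩ := qsB_shape a b c (m+1) (by omega)
          obtain ⟨u, v, huv⟩ := h
          rw [qsB_gform] at huv
          rcases ML hw1 hw2 z hz _ u v huv with
            ⟨M1, M2, u0, v0, hM, hu0, hocc⟩ | ⟨M1, M2, hM, hocc⟩
          · obtain ⟨m', i, hm1, hm2, hm3, hm4⟩ := ih z hz ⟨u0, v0, hocc⟩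
            exact ⟨m', i, hm1, by omega, hm3, hm4⟩
          · have hzmem : z ∈ Mst a b c (m+1) := by
              rw [hM]; exact List.mem_append_right _ List.mem_cons_self
            obtain ⟨j, hj, hjz⟩ := mem_Mst hzmem
            exact ⟨m+1, j, by omega, by omega, hj, hjz⟩

/-- Splitting a staircase separator list at an occurrence of a value. -/
lemma Mst_split (A : ℕ) (v : ℕ → ℕ) (hv : ∀ j j', v j = v j' → j = j') :
    ∀ (Bn i : ℕ) (M1 M2 : List ℕ),
      ((List.range Bn).map (fun j => List.replicate A (v j))).flatten = M1 ++ v i :: M2 →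
      i < Bn ∧ ∃ q, q < A ∧
        M1 = ((List.range i).map (fun j => List.replicate A (v j))).flatten ++
          List.replicate q (v i) := by
  intro Bn
  induction Bn with
  | zero =>
      intro i M1 M2 h
      simp at h
  | succ Bn ih =>
      intro i M1 M2 h
      rw [List.range_succ, List.map_append, List.flatten_append] at h
      set Mprev := ((List.range Bn).map (fun j => List.replicate A (v j))).flatten with hMprev
      simp only [List.map_cons, List.map_nil, List.flatten_cons, List.flatten_nil,
        List.append_nil] at h
      rcases Nat.lt_or_ge M1.length Mprev.length with hlt | hge
      · -- the occurrence is inside Mprev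
        have htake : Mprev = M1 ++ v i :: (M2.take (Mprev.length - M1.length - 1)) := by
          have h1 : (Mprev ++ List.replicate A (v Bn)).take Mprev.length = Mprev :=
            List.take_left' rfl
          rw [h] at h1
          rw [List.take_append, List.take_of_length_le (by omega)] at h1
          have h2 : Mprev.length - M1.length = (Mprev.length - M1.length - 1) + 1 := by omega
          rw [h2] at h1
          simp only [List.take_succ_cons] at h1
          exact h1.symm
        obtain ⟨hi, q, hq, hM1⟩ := ih i M1 _ htake
        exact ⟨by omega, q, hq, hM1⟩
      · -- the occurrence is inside the replicate block
        have hdrop : List.replicate A (v Bn) = (M1.drop Mprev.length) ++ v i :: M2 := by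
          have h1 : (Mprev ++ List.replicate A (v Bn)).drop Mprev.length =
              List.replicate A (v Bn) := List.drop_left
          rw [h] at h1
          rw [List.drop_append, Nat.sub_eq_zero_of_le hge,
            List.drop_zero] at h1
          exact h1.symm
        have hvmem : v i ∈ List.replicate A (v Bn) := by
          rw [hdrop]; exact List.mem_append_right _ List.mem_cons_self
        have hiB : i = Bn := hv _ _ (List.eq_of_mem_replicate hvmem)
        subst hiB
        have hlen : A = M1.length - Mprev.length + 1 + M2.length := by
          have := congrArg List.length hdrop
          simp at this
          omega
        refine ⟨by omega, M1.length - Mprev.length, by omega, ?_⟩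
        have hM1drop : M1.drop Mprev.length = List.replicate (M1.length - Mprev.length) (v i) := by
          rw [List.eq_replicate_iff]
          refine ⟨by simp, ?_⟩
          intro x hx
          have : x ∈ List.replicate A (v i) := by
            rw [hdrop]; exact List.mem_append_left _ hx
          exact List.eq_of_mem_replicate this
        have hM1take : M1.take Mprev.length = Mprev := by
          have h1 : (Mprev ++ List.replicate A (v i)).take Mprev.length = Mprev :=
            List.take_left' rfl
          rw [h] at h1
          rw [List.take_append,
            Nat.sub_eq_zero_of_le hge, List.take_zero, List.append_nil] at h1
          exact h1
        conv_lhs => rw [← List.take_append_drop Mprev.length M1]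
        rw [hM1take, hM1drop]

/-- Every occurrence of `0 1^{c n + i} 0` in `B (n+1)` sits at the end of the `q`-th
chunk of the `i`-th block. -/
lemma occ_in_Bsucc (a b c : ℕ → ℕ)
    (hc : ∀ n, 1 ≤ n → 1 ≤ c n ∧ c n ≤ c (n+1))
    (hcb : ∀ n, 1 ≤ n → c n + b n ≤ c (n+1))
    (n i : ℕ) (hn : 1 ≤ n) (hi : i < b n) (u0 v0 : List Bool)
    (h : u0 ++ occw (c n + i) ++ v0 = qsB a b c (n+1)) :
    ∃ q, 1 ≤ q ∧ q ≤ a n ∧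
      u0 ++ occw (c n + i) =
        ((List.range i).map (fun j => wpow (qsB a b c n ++ ones (c n + j)) (a n))).flatten ++
          wpow (qsB a b c n ++ ones (c n + i)) q ++ [false] := by
  obtain ⟨m, rfl⟩ : ∃ m, n = m + 1 := ⟨n - 1, by omega⟩
  set n := m + 1
  have hz : 1 ≤ c n + i := by have := (hc n hn).1; omega
  obtain ⟨⟨w1, hw1⟩, ⟨w2, hw2⟩⟩ := qsB_shape a b c n hn
  rw [qsB_gform] at h
  rcases ML hw1 hw2 (c n + i) hz _ u0 v0 h with
    ⟨M1, M2, u0', v0', hM, hu0, hocc⟩ | ⟨M1, M2, hM, hocc⟩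
  · -- impossible: would be an occurrence inside B n
    exfalso
    obtain ⟨m', i', hm1, hm2, hm3, hm4⟩ :=
      occ_infix_qsB a b c n (c n + i) hz ⟨u0', v0', hocc⟩
    have := qs_disj hc hcb n m' i i' hn hm1 hi hm3 hm4
    omega
  · -- the genuine case
    have hsplit := Mst_split (a n) (fun j => c n + j) (fun j j' (hjj : c n + j = c n + j') => by omega)
      (b n) i M1 M2 (by simpa [Mst] using hM)
    obtain ⟨-, q', hq', hM1⟩ := hsplit
    refine ⟨q' + 1, by omega, by omega, ?_⟩
    rw [hocc, hM1]
    rw [List.map_append, List.flatten_append]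
    have e2 : ((List.replicate q' ((fun j => c n + j) i)).map
        (fun k => qsB a b c n ++ ones k)).flatten = wpow (qsB a b c n ++ ones (c n + i)) q' :=
      wpow_eq_flatten_map _ _ _ _ rfl
    have e1 : ((((List.range i).map (fun j => List.replicate (a n) ((fun j => c n + j) j))).flatten).map
        (fun k => qsB a b c n ++ ones k)).flatten =
        ((List.range i).map (fun j => wpow (qsB a b c n ++ ones (c n + j)) (a n))).flatten := by
      rw [flatten_flatten_map, List.map_map]
      congr 1
      apply List.map_congr_left
      intro j _
      simp only [Function.comp_apply]
      exact wpow_eq_flatten_map _ _ _ _ rfl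
    rw [e1, e2]
    rw [wpow_succ]
    simp [occw, List.append_assoc]

/-- Decomposition of `B N` into copies of `B (n+1)` separated by long runs of ones. -/
lemma qsB_decomp (a b c : ℕ → ℕ)
    (hc : ∀ n, 1 ≤ n → 1 ≤ c n ∧ c n ≤ c (n+1))
    (n : ℕ) (hn : 1 ≤ n) :
    ∀ N, n + 1 ≤ N → ∃ L : List ℕ, (∀ k ∈ L, c (n+1) ≤ k) ∧
      qsB a b c N =
        ((L.map (fun k => qsB a b c (n+1) ++ ones k)).flatten) ++ qsB a b c (n+1) := by
  intro N
  induction N with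
  | zero => omega
  | succ N ihN =>
      intro hN
      rcases Nat.lt_or_ge n (N) with hlt | hge
      · -- n + 1 ≤ N, use the inductive hypothesis
        obtain ⟨L, hLmem, hL⟩ := ihN (by omega)
        obtain ⟨m, rfl⟩ : ∃ m, N = m + 1 := ⟨N - 1, by omega⟩
        set f : ℕ → List Bool := fun k => qsB a b c (n+1) ++ ones k with hf
        refine ⟨((Mst a b c (m+1)).map (fun k => L ++ [k])).flatten ++ L, ?_, ?_⟩
        · intro k' hk'
          rcases List.mem_append.mp hk' with hk' | hk'
          · obtain ⟨l, hl, hk'l⟩ := List.mem_flatten.mp hk'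
            obtain ⟨k, hkM, rfl⟩ := List.mem_map.mp hl
            rcases List.mem_append.mp hk'l with h1 | h1
            · exact hLmem _ h1
            · obtain ⟨j, hj, rfl⟩ := mem_Mst hkM
              have h2 := List.mem_singleton.mp h1
              have h3 : c (n+1) ≤ c (m+1) :=
                mono_step (fun m hm => (hc m hm).2) (n+1) (m+1) (by omega) (by omega)
              omega
          · exact hLmem _ hk'
        · rw [qsB_gform, hL]
          rw [List.map_append, List.flatten_append, ← List.append_assoc]
          congr 1
          rw [flatten_flatten_map, List.map_map]
          congr 1
          refine congrArg List.flatten ?_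
          symm
          apply List.map_congr_left
          intro k hk
          simp only [Function.comp_apply, List.map_append, List.flatten_append, hf]
          simp [List.append_assoc]
      · -- base case : N + 1 = n + 1
        have : N = n := by omega
        subst this
        exact ⟨[], by simp, by simp⟩


lemma qsOccWord_length (a b c : ℕ → ℕ) (n i q : ℕ) :
    (qsOccWord a b c n i q).length = c (n+1) +
      ((List.range i).map (fun j => wpow (qsB a b c n ++ ones (c n + j)) (a n))).flatten.length +
      q * ((qsB a b c n).length + (c n + i)) + 1 := by
  simp [qsOccWord]
  omega

/-- Main occurrence lemma: any occurrence of `0 1^{c n + i} 0` in `B N` with enough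
room on the left is a suffix of `qsOccWord n i q` for some `1 ≤ q ≤ a n`. -/
lemma occ_main (a b c : ℕ → ℕ)
    (hc : ∀ n, 1 ≤ n → 1 ≤ c n ∧ c n ≤ c (n+1))
    (hcb : ∀ n, 1 ≤ n → c n + b n ≤ c (n+1))
    (n i : ℕ) (hn : 1 ≤ n) (hi : i < b n) (N : ℕ) (u v : List Bool)
    (h : u ++ occw (c n + i) ++ v = qsB a b c N)
    (hlen : (qsOccWord a b c n i (a n)).length ≤ u.length + (c n + i + 2)) :
    ∃ q, 1 ≤ q ∧ q ≤ a n ∧ qsOccWord a b c n i q <:+ (u ++ occw (c n + i)) := by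
  have hz : 1 ≤ c n + i := by have := (hc n hn).1; omega
  -- N must be at least n+1
  obtain ⟨m', i', hm1, hm2, hm3, hm4⟩ := occ_infix_qsB a b c N (c n + i) hz ⟨u, v, h⟩
  have hmn := qs_disj hc hcb n m' i i' hn hm1 hi hm3 hm4
  have hN : n + 1 ≤ N := by omega
  obtain ⟨L, hLmem, hL⟩ := qsB_decomp a b c hc n hn N hN
  rw [hL] at h
  obtain ⟨⟨w1, hw1⟩, ⟨w2, hw2⟩⟩ := qsB_shape a b c (n+1) (by omega)
  rcases ML hw1 hw2 (c n + i) hz L u v h with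
    ⟨K1, K2, u0, v0, hK, hu, hocc0⟩ | ⟨M1, M2, hM, hocc⟩
  · -- occurrence inside a copy of B (n+1)
    obtain ⟨q, hq1, hq2, hval⟩ := occ_in_Bsucc a b c hc hcb n i hn hi u0 v0 hocc0
    refine ⟨q, hq1, hq2, ?_⟩
    set f : ℕ → List Bool := fun k => qsB a b c (n+1) ++ ones k with hf
    set PREF := ((List.range i).map
      (fun j => wpow (qsB a b c n ++ ones (c n + j)) (a n))).flatten with hPREF
    set CH := (qsB a b c n).length + (c n + i) with hCH
    have ulen : u.length = ((K1.map f).flatten).length + u0.length := by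
      rw [hu]; simp
    have uocc : u0.length + (c n + i + 2) = PREF.length + q * CH + 1 := by
      have := congrArg List.length hval
      simp [occw_length, hCH] at this ⊢
      omega
    have qle : q * CH ≤ a n * CH := Nat.mul_le_mul_right _ hq2
    have lenA := qsOccWord_length a b c n i (a n)
    have lenq := qsOccWord_length a b c n i q
    have hflen : c (n+1) ≤ ((K1.map f).flatten).length := by
      rw [lenA] at hlen
      rw [← hPREF, ← hCH] at hlen
      omega
    have hc1 : 1 ≤ c (n+1) := by have := hc n hn; omega
    rcases List.eq_nil_or_concat K1 with rfl | ⟨K1', k, rfl⟩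
    · simp at hflen; omega
    · have hkL : k ∈ L := by
        rw [hK]
        exact List.mem_append_left _ (by simp)
      have hkc : c (n+1) ≤ k := hLmem _ hkL
      have hones : ones k = ones (k - c (n+1)) ++ ones (c (n+1)) := by
        rw [ones, ones, ones, ← List.replicate_add]
        congr 1
        omega
      have key : u ++ occw (c n + i) =
          ((K1'.concat k).map f).flatten ++ (PREF ++ wpow (qsB a b c n ++ ones (c n + i)) q ++ [false]) := by
        rw [hu, List.append_assoc, hval]
      refine ⟨(K1'.map f).flatten ++ qsB a b c (n+1) ++ ones (k - c (n+1)), ?_⟩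
      rw [key, List.concat_eq_append, List.map_append, List.flatten_append, qsOccWord]
      simp only [hf, List.map_cons, List.map_nil, List.flatten_cons, List.flatten_nil,
        List.append_nil, hones]
      simp [List.append_assoc, hPREF]
  · -- impossible: the separator would be too short
    have hzmem : (c n + i) ∈ L := by
      rw [hM]; exact List.mem_append_right _ List.mem_cons_self
    have := hLmem _ hzmem
    have := hcb n hn
    omega


lemma flatMap_pure_cast (l : List ℕ) :
    (l.flatMap fun a => ([((a:ℤ))] : List ℤ)) = l.map (Nat.cast : ℕ → ℤ) := by
  induction l with
  | nil => rfl
  | cons h t ih => simpa using ih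

lemma readWord_eq {A : Type*} (x : ℤ → A) (s : ℤ) (len : ℕ) :
    readWord x s len = List.map (fun i : ℕ => x (s + (i : ℤ))) (List.range len) := by
  simp [readWord]
  generalize List.range len = l
  induction l with
  | nil => rfl
  | cons h t ih => simpa using ih

@[simp] lemma readWord_length {A : Type*} (x : ℤ → A) (s : ℤ) (len : ℕ) :
    (readWord x s len).length = len := by
  rw [readWord_eq, List.length_map, List.length_range]

lemma readWord_add {A : Type*} (x : ℤ → A) (s : ℤ) (m l : ℕ) :
    readWord x s (m + l) = readWord x s m ++ readWord x (s + (m : ℤ)) l := by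
  simp only [readWord_eq, List.range_add, List.map_append, List.map_map]
  congr 1
  apply List.map_congr_left
  intro j _
  simp only [Function.comp_apply]
  congr 1
  push_cast
  ring



/-- If `z ≥ 1` and `0 1^z 0` is in the language, then `z = c n + i` for unique `n ≥ 1`
and `0 ≤ i < b n`; moreover `0 1^{c n + i} 0` is not a subword of `B m` for `m ≤ n`, and
every occurrence of `0 1^{c n + i} 0` in a point of the subshift is as a suffix of
`1^{c (n+1)} (∏_{j<i} (B n 1^{c n + j})^{a n}) (B n 1^{c n + i})^q 0` for some
`1 ≤ q ≤ a n`. -/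
theorem qs_zero_ones_zero (a b c : ℕ → ℕ) (hQS : QShyp a b c)
    (z : ℕ) (hz : 1 ≤ z) (hin : ([false] ++ ones z ++ [false]) ∈ qsL a b c) :
    ∃ n i : ℕ, 1 ≤ n ∧ i < b n ∧ z = c n + i ∧
      (∀ n' i' : ℕ, 1 ≤ n' → i' < b n' → z = c n' + i' → n' = n ∧ i' = i) ∧
      (∀ m, m ≤ n → ¬ (([false] ++ ones (c n + i) ++ [false]) <:+: qsB a b c m)) ∧
      (∀ x ∈ qsX a b c, ∀ t : ℤ,
        readWord x t (c n + i + 2) = [false] ++ ones (c n + i) ++ [false] →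
        ∃ q : ℕ, 1 ≤ q ∧ q ≤ a n ∧
          readWord x (t + ((c n + i + 2 : ℕ) : ℤ) - ((qsOccWord a b c n i q).length : ℤ))
            (qsOccWord a b c n i q).length = qsOccWord a b c n i q) := by
  obtain ⟨ha, -, hb, -, hc, -, hcb⟩ := hQS
  obtain ⟨N, hN1, hinf⟩ := hin
  have hinf' : occw z <:+: qsB a b c N := hinf
  obtain ⟨n, i, hn1, hnN, hib, hzeq⟩ := occ_infix_qsB a b c N z hz hinf'
  subst hzeq
  refine ⟨n, i, hn1, hib, rfl, ?_, ?_, ?_⟩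
  · -- uniqueness
    intro n' i' h1 h2 h3
    exact qs_disj hc hcb n' n i' i h1 hn1 h2 hib h3.symm
  · -- non-occurrence in B m for m ≤ n
    intro m hm hcontra
    have hzpos : 1 ≤ c n + i := by have := (hc n hn1).1; omega
    obtain ⟨m', i'', hm1, hm2, hm3, hm4⟩ := occ_infix_qsB a b c m (c n + i) hzpos hcontra
    have := qs_disj hc hcb n m' i i'' hn1 hm1 hib hm3 hm4
    omega
  · -- occurrence structure
    intro x hx t hread
    set z2 := c n + i with hz2
    have hzpos : 1 ≤ z2 := by have := (hc n hn1).1; omega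
    set LM := (qsOccWord a b c n i (a n)).length with hLM
    set PREF := ((List.range i).map
      (fun j => wpow (qsB a b c n ++ ones (c n + j)) (a n))).flatten with hPREF
    set CH := (qsB a b c n).length + (c n + i) with hCH
    have hBnlen : 1 ≤ (qsB a b c n).length := by
      obtain ⟨⟨w1, hw1⟩, -⟩ := qsB_shape a b c n hn1
      rw [hw1]; simp
    have han : 1 ≤ a n := (ha n hn1).1
    have hc1 : 1 ≤ c (n+1) := by have := hc n hn1; omega
    have hCHle : CH ≤ a n * CH := Nat.le_mul_of_pos_left _ (by omega)
    have hLMA := qsOccWord_length a b c n i (a n)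
    rw [← hLM, ← hPREF, ← hCH] at hLMA
    have hLMge : z2 + 2 ≤ LM := by omega
    set s := t + ((z2 + 2 : ℕ) : ℤ) - (LM : ℤ) with hs
    obtain ⟨N', hN'1, hinfw⟩ := hx (readWord x s LM) ⟨s, by rw [readWord_length]⟩
    obtain ⟨u1, v1, h1⟩ := hinfw
    set W1 := readWord x s (LM - (z2 + 2)) with hW1
    have hsplit : readWord x s LM = W1 ++ readWord x (s + ((LM - (z2+2) : ℕ) : ℤ)) (z2+2) := by
      conv_lhs => rw [show LM = (LM - (z2+2)) + (z2+2) by omega]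
      exact readWord_add x s _ _
    have hst : s + ((LM - (z2+2) : ℕ) : ℤ) = t := by
      rw [hs]; push_cast [Nat.cast_sub hLMge]; ring
    have hoccpart : readWord x t (z2 + 2) = occw z2 := hread
    rw [hsplit, hst, hoccpart] at h1
    have h1' : (u1 ++ W1) ++ occw z2 ++ v1 = qsB a b c N' := by
      rw [← h1]; simp [List.append_assoc]
    have hulen : LM ≤ (u1 ++ W1).length + (z2 + 2) := by
      simp only [List.length_append, hW1, readWord_length]
      omega
    obtain ⟨q, hq1, hq2, hsuf⟩ :=
      occ_main a b c hc hcb n i hn1 hib N' (u1 ++ W1) v1 h1' (by rw [← hLM]; exact hulen)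
    set lenq := (qsOccWord a b c n i q).length with hlenq
    have hlenqval := qsOccWord_length a b c n i q
    rw [← hlenq, ← hPREF, ← hCH] at hlenqval
    have hqCH : q * CH ≤ a n * CH := Nat.mul_le_mul_right _ hq2
    have lenqle : lenq ≤ LM := by omega
    have hwsuf : readWord x s LM <:+ (u1 ++ W1) ++ occw z2 :=
      ⟨u1, by rw [hsplit, hst, hoccpart, List.append_assoc]⟩
    have hfinal : qsOccWord a b c n i q <:+ readWord x s LM := by
      rcases List.suffix_or_suffix_of_suffix hsuf hwsuf with h | h
      · exact h
      · have hleneq : (readWord x s LM).length = lenq := by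
          have := List.IsSuffix.length_le h
          rw [readWord_length] at this ⊢
          omega
        rw [List.IsSuffix.eq_of_length h (by rw [hleneq])]
    obtain ⟨w2, hw2eq⟩ := hfinal
    have hw2len : w2.length = LM - lenq := by
      have := congrArg List.length hw2eq
      rw [List.length_append, readWord_length] at this
      omega
    have hsplit2 : readWord x s LM =
        readWord x s (LM - lenq) ++ readWord x (s + ((LM - lenq : ℕ) : ℤ)) lenq := by
      conv_lhs => rw [show LM = (LM - lenq) + lenq by omega]
      exact readWord_add x s _ _
    rw [hsplit2] at hw2eq
    have hinj := List.append_inj hw2eq (by rw [readWord_length]; omega)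
    have harg : s + ((LM - lenq : ℕ) : ℤ) = t + ((z2 + 2 : ℕ) : ℤ) - (lenq : ℤ) := by
      rw [hs]; push_cast [Nat.cast_sub lenqle]; ring
    refine ⟨q, hq1, hq2, ?_⟩
    have h2 := hinj.2
    rw [harg] at h2
    exact h2.symm
end

section
/- In the quasi-staircase subshift: if w is a right-special word, then at least one of the following holds: (i) w = 1^{|w|}; (ii) w is a suffix of 1^{c_n+i−1}(B_n 1^{c_n+i})^{a_n} for some n ≥ 1 and some 0 ≤ i < b_n; (iii) w is a suffix of 1^{c_n+b_n−1} B_n 1^{c_n} for some n ≥ 1; (iv) w = 1^{c_n} (B_n 1^{c_n})^{a_n} for some n ≥ 1. -/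
open Filter MeasureTheory
open scoped ENNReal

namespace QS


/-! ### Generic list lemmas -/

def zrun (z : ℕ) : List Bool := false :: ones z

@[simp] lemma length_ones (k : ℕ) : (ones k).length = k := List.length_replicate

@[simp] lemma length_zrun (z : ℕ) : (zrun z).length = z + 1 := by simp [zrun]

lemma ones_add (s t : ℕ) : ones (s + t) = ones s ++ ones t := List.replicate_add s t true

lemma ones_succ (t : ℕ) : ones (t + 1) = true :: ones t := List.replicate_succ ..

lemma ones_concat (t : ℕ) : ones (t + 1) = ones t ++ [true] := List.replicate_succ' ..

lemma mem_ones {x : Bool} {k : ℕ} (h : x ∈ ones k) : x = true := List.eq_of_mem_replicate h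

@[simp] lemma wpow_zero (v : List Bool) : wpow v 0 = [] := rfl

lemma wpow_succ (v : List Bool) (k : ℕ) : wpow v (k+1) = v ++ wpow v k := by
  simp [wpow, List.replicate_succ]

lemma wpow_succ' (v : List Bool) (k : ℕ) : wpow v (k+1) = wpow v k ++ v := by
  simp [wpow, List.replicate_succ']

lemma wpow_one (v : List Bool) : wpow v 1 = v := by
  rw [show (1:ℕ) = 0 + 1 from rfl, wpow_succ']; simp

lemma wpow_add (v : List Bool) (s t : ℕ) : wpow v (s+t) = wpow v s ++ wpow v t := by
  rw [wpow, List.replicate_add, List.flatten_append]; rfl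

lemma length_wpow (v : List Bool) (k : ℕ) : (wpow v k).length = k * v.length := by
  induction k with
  | zero => simp
  | succ k ih => rw [wpow_succ, List.length_append, ih]; ring

lemma suffix_of_suffix_le {u v x : List Bool} (hu : u <:+ x) (hv : v <:+ x)
    (h : u.length ≤ v.length) : u <:+ v := by
  rw [← List.reverse_prefix] at hu hv ⊢
  exact List.prefix_of_prefix_length_le hu hv (by simpa using h)

lemma mismatch {w A B S : List Bool} {x y : Bool} (hx : w <:+ A ++ x :: S)
    (hy : w <:+ B ++ y :: S) (hxy : x ≠ y) : w <:+ S := by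
  rcases le_or_gt w.length S.length with h | h
  · exact suffix_of_suffix_le hx ((List.suffix_cons x S).trans (List.suffix_append A _)) h
  · exfalso
    have hxS : x :: S <:+ w :=
      suffix_of_suffix_le ((List.suffix_append A _)) hx (by simpa using h)
    have h2 : x :: S <:+ B ++ y :: S := hxS.trans hy
    have h3 : y :: S <:+ B ++ y :: S := List.suffix_append B _
    have := (suffix_of_suffix_le h2 h3 (by simp)).eq_of_length (by simp)
    exact hxy (by injection this)

lemma sublist_ones {u : List Bool} {k : ℕ} (h : List.Sublist u (ones k)) :
    u = ones u.length := by
  refine List.eq_replicate_length.mpr (fun x hx => mem_ones (h.subset hx))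

lemma suffix_ones {u : List Bool} {k : ℕ} (h : u <:+ ones k) : u = ones u.length :=
  sublist_ones h.sublist

lemma zrun_suffix_unique_aux {p : List Bool} {z z' : ℕ} (hlt : z < z')
    (h : zrun z <:+ p) (h' : zrun z' <:+ p) : False := by
  have h1 : zrun z <:+ zrun z' := suffix_of_suffix_le h h' (by simp; omega)
  have h2 : zrun z <:+ ones z' :=
    suffix_of_suffix_le h1 (by exact (List.suffix_cons false (ones z'))) (by simp; omega)
  have := suffix_ones h2
  simp [zrun, ones, List.replicate_succ] at this

lemma zrun_suffix_unique {p : List Bool} {z z' : ℕ} (h : zrun z <:+ p)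
    (h' : zrun z' <:+ p) : z = z' := by
  rcases Nat.lt_trichotomy z z' with hlt | he | hlt
  · exact (zrun_suffix_unique_aux hlt h h').elim
  · exact he
  · exact (zrun_suffix_unique_aux hlt h' h).elim

lemma ones_suffix_ones {s t : ℕ} (h : s ≤ t) : ones s <:+ ones t :=
  ⟨ones (t - s), by rw [← ones_add]; congr 1; omega⟩

lemma peel {s t : ℕ} (S : List Bool) (h : s ≤ t) : ones s ++ S <:+ ones t ++ S :=
  ⟨ones (t - s), by rw [← List.append_assoc, ← ones_add]; congr 2; omega⟩

lemma ones_peel {z r : ℕ} (hlt : z < r) : ones r = ones (r - z - 1) ++ true :: ones z := by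
  conv_lhs => rw [show r = (r - z - 1) + (z + 1) by omega]
  rw [ones_add, ones_succ]

lemma prefix_split {p u v : List Bool} {x : Bool} (h : p ++ [x] <+: u ++ v) :
    (p ++ [x] <+: u) ∨ ∃ r, p = u ++ r ∧ r ++ [x] <+: v := by
  rcases le_or_gt (p.length + 1) u.length with hl | hl
  · left
    exact List.prefix_of_prefix_length_le h (List.prefix_append u v) (by simpa using hl)
  · right
    have hup : u <+: p := by
      have h1 : u <+: p ++ [x] :=
        List.prefix_of_prefix_length_le (List.prefix_append u v) h
          (by simp only [List.length_append, List.length_cons, List.length_nil]; omega)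
      rcases h1 with ⟨t, ht⟩
      rcases t.eq_nil_or_concat with rfl | ⟨t', y, rfl⟩
      · exfalso; have := congrArg List.length ht; simp at this; omega
      · exact ⟨t', by have := congrArg List.dropLast ht; simpa using this⟩
    rcases hup with ⟨r, rfl⟩
    refine ⟨r, rfl, ?_⟩
    rw [List.append_assoc] at h
    exact (List.prefix_append_right_inj u).mp h

lemma prefix_head {p Y : List Bool} (hp : p <+: false :: Y) (hne : p ≠ []) :
    ∃ X, p = false :: X := by
  rcases p with _ | ⟨x, p⟩
  · exact absurd rfl hne
  · rcases hp with ⟨t, ht⟩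
    rw [List.cons_append] at ht
    injection ht with h1 _
    exact ⟨p, by rw [h1]⟩

lemma zrun_transfer {p p' : List Bool} {z : ℕ} (hsub : p' <:+ p) (hz : zrun z <:+ p)
    (hd : ∃ X, p' = false :: X) : zrun z <:+ p' := by
  rcases le_or_gt p'.length z with hl | hl
  · exfalso
    obtain ⟨X, rfl⟩ := hd
    have h1 : ones z <:+ p := ((List.suffix_cons false (ones z)).trans hz)
    have h2 : (false :: X) <:+ ones z := suffix_of_suffix_le hsub h1 (by simpa using hl)
    have := suffix_ones h2
    simp [ones, List.replicate_succ] at this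
  · exact suffix_of_suffix_le hz hsub (by simp; omega)

lemma tail_decomp : ∀ w : List Bool, w = ones w.length ∨ ∃ u z, w = u ++ zrun z := by
  intro w
  induction w using List.reverseRecOn with
  | nil => left; rfl
  | append_singleton ys x ih =>
    cases x with
    | false => right; exact ⟨ys, 0, by simp [zrun, ones]⟩
    | true =>
      rcases ih with hone | ⟨u, z, rfl⟩
      · left
        conv_lhs => rw [hone]
        rw [← ones_concat]
        simp
      · right
        refine ⟨u, z + 1, ?_⟩
        simp [zrun, ones_concat, List.append_assoc]

/-! ### Structure of the quasi-staircase words -/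

section Staircase

variable (a b c : ℕ → ℕ)

def pref (m j : ℕ) : List Bool :=
  ((List.range j).map (fun i => wpow (qsB a b c m ++ ones (c m + i)) (a m))).flatten

def Pcond (n i : ℕ) (P : List Bool) : Prop :=
  (P = [] ∧ i = 0) ∨ (1 ≤ i ∧ zrun (c n + i - 1) <:+ P) ∨
  (i = 0 ∧ ∃ e, c n + b n ≤ e ∧ zrun e <:+ P)

@[simp] lemma pref_zero (m : ℕ) : pref a b c m 0 = [] := rfl

lemma pref_succ (m j : ℕ) :
    pref a b c m (j+1) = pref a b c m j ++ wpow (qsB a b c m ++ ones (c m + j)) (a m) := by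
  simp [pref, List.range_succ]

lemma qsB_succ : ∀ m : ℕ, 1 ≤ m → qsB a b c (m+1) = pref a b c m (b m) ++ qsB a b c m := by
  intro m hm
  match m, hm with
  | (k+1), _ => rfl

variable {a b c}

lemma a_pos (h : QShyp a b c) {n : ℕ} (hn : 1 ≤ n) : 1 ≤ a n := (h.1 n hn).1
lemma b_pos (h : QShyp a b c) {n : ℕ} (hn : 1 ≤ n) : 1 ≤ b n := (h.2.2.1 n hn).1
lemma c_pos (h : QShyp a b c) {n : ℕ} (hn : 1 ≤ n) : 1 ≤ c n := (h.2.2.2.2.1 n hn).1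
lemma c_step (h : QShyp a b c) {n : ℕ} (hn : 1 ≤ n) : c n + b n ≤ c (n+1) :=
  h.2.2.2.2.2.2 n hn

lemma c_mono (h : QShyp a b c) {n m : ℕ} (hn : 1 ≤ n) (hnm : n ≤ m) : c n ≤ c m := by
  induction m, hnm using Nat.le_induction with
  | base => exact le_rfl
  | succ m hm ih => exact ih.trans (h.2.2.2.2.1 m (hn.trans hm)).2

lemma c_big (h : QShyp a b c) {n m : ℕ} (hn : 1 ≤ n) (hnm : n < m) : c n + b n ≤ c m :=
  (c_step h hn).trans (c_mono h (by omega) hnm)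

lemma uniq (h : QShyp a b c) {n m i j : ℕ} (hn : 1 ≤ n) (hm : 1 ≤ m) (hi : i < b n)
    (hj : j < b m) (he : c n + i = c m + j) : n = m ∧ i = j := by
  rcases Nat.lt_trichotomy n m with hlt | rfl | hlt
  · have := c_big h hn hlt; omega
  · omega
  · have := c_big h hm hlt; omega

lemma B_last : ∀ n : ℕ, 1 ≤ n → ∃ X, qsB a b c n = X ++ [false] := by
  intro n hn
  induction n, hn using Nat.le_induction with
  | base => exact ⟨[], rfl⟩
  | succ m hm ih =>
      obtain ⟨X, hX⟩ := ih
      exact ⟨pref a b c m (b m) ++ X, by rw [qsB_succ a b c m hm, hX, List.append_assoc]⟩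

lemma pref_head (h : QShyp a b c) {m : ℕ} (hm : 1 ≤ m) :
    ∀ j : ℕ, 1 ≤ j → ∃ R, pref a b c m j = qsB a b c m ++ R := by
  intro j hj
  induction j, hj using Nat.le_induction with
  | base =>
      obtain ⟨t, ht⟩ : ∃ t, a m = t + 1 := ⟨a m - 1, by have := a_pos h hm; omega⟩
      refine ⟨ones (c m + 0) ++ wpow (qsB a b c m ++ ones (c m + 0)) t, ?_⟩
      rw [pref_succ, pref_zero, List.nil_append, ht, wpow_succ, List.append_assoc]
  | succ j hj ih =>
      obtain ⟨R, hR⟩ := ih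
      exact ⟨R ++ wpow (qsB a b c m ++ ones (c m + j)) (a m), by
        rw [pref_succ, hR, List.append_assoc]⟩

lemma B_head (h : QShyp a b c) : ∀ n : ℕ, 1 ≤ n → ∃ X, qsB a b c n = false :: X := by
  intro n hn
  induction n, hn using Nat.le_induction with
  | base => exact ⟨[], rfl⟩
  | succ m hm ih =>
      obtain ⟨X, hX⟩ := ih
      obtain ⟨R, hR⟩ := pref_head h hm (b m) (b_pos h hm)
      refine ⟨X ++ R ++ (false :: X), ?_⟩
      rw [qsB_succ a b c m hm, hR, hX]
      simp

lemma pref_ends (h : QShyp a b c) {m : ℕ} (hm : 1 ≤ m) {j : ℕ} (hj : 1 ≤ j) :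
    zrun (c m + (j - 1)) <:+ pref a b c m j := by
  obtain ⟨j', rfl⟩ : ∃ j', j = j' + 1 := ⟨j - 1, by omega⟩
  obtain ⟨t, ht⟩ : ∃ t, a m = t + 1 := ⟨a m - 1, by have := a_pos h hm; omega⟩
  obtain ⟨X, hX⟩ := B_last m hm
  refine ⟨pref a b c m j' ++ wpow (qsB a b c m ++ ones (c m + j')) t ++ X, ?_⟩
  rw [pref_succ, ht, wpow_succ', hX]
  simp [zrun, List.append_assoc]

lemma ctx_ends_pos (h : QShyp a b c) {m j k : ℕ} (hm : 1 ≤ m) (hk : 1 ≤ k) :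
    zrun (c m + j) <:+ pref a b c m j ++ wpow (qsB a b c m ++ ones (c m + j)) k := by
  obtain ⟨t, rfl⟩ : ∃ t, k = t + 1 := ⟨k - 1, by omega⟩
  obtain ⟨X, hX⟩ := B_last m hm
  refine ⟨pref a b c m j ++ wpow (qsB a b c m ++ ones (c m + j)) t ++ X, ?_⟩
  rw [wpow_succ', hX]
  simp [zrun, List.append_assoc]

lemma B_suffix_le {n N : ℕ} (hn : 1 ≤ n) (hnN : n ≤ N) : qsB a b c n <:+ qsB a b c N := by
  induction N, hnN using Nat.le_induction with
  | base => exact List.suffix_rfl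
  | succ m hm ih =>
      exact ih.trans (by rw [qsB_succ a b c m (hn.trans hm)]; exact List.suffix_append _ _)

lemma length_B_pos {n : ℕ} (hn : 1 ≤ n) : 0 < (qsB a b c n).length := by
  obtain ⟨X, hX⟩ := B_last (a := a) (b := b) (c := c) n hn
  rw [hX]; simp

lemma Pcond_ctx (h : QShyp a b c) {n M j k₀ : ℕ} (hn : 1 ≤ n) (hM : 1 ≤ M) (hnM : n < M)
    (hjk : j < b M ∧ k₀ < a M ∨ j = b M ∧ k₀ = 0) :
    Pcond b c n 0 (pref a b c M j ++ wpow (qsB a b c M ++ ones (c M + j)) k₀) := by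
  rcases Nat.eq_zero_or_pos k₀ with rfl | hk₀
  · rcases Nat.eq_zero_or_pos j with rfl | hj
    · exact Or.inl ⟨by simp, rfl⟩
    · refine Or.inr (Or.inr ⟨rfl, c M + (j-1), ?_, by simpa using (pref_ends h hM hj)⟩)
      have := c_big h hn hnM; omega
  · refine Or.inr (Or.inr ⟨rfl, c M + j, ?_, ctx_ends_pos h hM hk₀⟩)
    have := c_big h hn hnM; omega

lemma split_wpow {v : List Bool} {x : Bool} :
    ∀ {k : ℕ} {p : List Bool}, p ++ [x] <+: wpow v k →
      ∃ k' r, k' < k ∧ p = wpow v k' ++ r ∧ r ++ [x] <+: v := by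
  intro k
  induction k with
  | zero =>
      intro p hp; exfalso
      have := hp.length_le; simp at this
  | succ k ih =>
      intro p hp
      rw [wpow_succ] at hp
      rcases prefix_split hp with h1 | ⟨r, rfl, h2⟩
      · exact ⟨0, p, by omega, by simp, h1⟩
      · obtain ⟨k', r', hk', rfl, h3⟩ := ih h2
        exact ⟨k' + 1, r', by omega, by rw [wpow_succ, List.append_assoc], h3⟩

lemma split_pref {m : ℕ} :
    ∀ {j : ℕ} {p : List Bool} {x : Bool}, p ++ [x] <+: pref a b c m j →
      ∃ j' k r, j' < j ∧ k < a m ∧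
        p = pref a b c m j' ++ wpow (qsB a b c m ++ ones (c m + j')) k ++ r ∧
        r ++ [x] <+: qsB a b c m ++ ones (c m + j') := by
  intro j
  induction j with
  | zero =>
      intro p x hp; exfalso
      have := hp.length_le; simp [pref] at this
  | succ j ih =>
      intro p x hp
      rw [pref_succ] at hp
      rcases prefix_split hp with h1 | ⟨r, rfl, h2⟩
      · obtain ⟨j', k, r, hj', hk, rfl, h3⟩ := ih h1
        exact ⟨j', k, r, by omega, hk, rfl, h3⟩
      · obtain ⟨k, r', hk, rfl, h3⟩ := split_wpow h2
        exact ⟨j, k, r', by omega, hk, by rw [List.append_assoc], h3⟩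

lemma split0 (h : QShyp a b c) {N : ℕ} (hN : 1 ≤ N) {p : List Bool}
    (hp : p ++ [false] <+: qsB a b c (N+1)) :
    ∃ j k p', (j < b N ∧ k < a N ∨ j = b N ∧ k = 0) ∧
      p = pref a b c N j ++ wpow (qsB a b c N ++ ones (c N + j)) k ++ p' ∧
      p' ++ [false] <+: qsB a b c N := by
  rw [qsB_succ a b c N hN] at hp
  rcases prefix_split hp with h1 | ⟨p', rfl, h2⟩
  · obtain ⟨j, k, r, hj, hk, rfl, h3⟩ := split_pref h1
    rcases prefix_split h3 with h4 | ⟨r', rfl, h5⟩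
    · exact ⟨j, k, r, Or.inl ⟨hj, hk⟩, rfl, h4⟩
    · exfalso
      have hmem : false ∈ ones (c N + j) := h5.sublist.subset (by simp)
      simpa using mem_ones hmem
  · exact ⟨b N, 0, p', Or.inr ⟨rfl, rfl⟩, by simp, h2⟩

lemma split1 (h : QShyp a b c) {N : ℕ} (hN : 1 ≤ N) {q : List Bool}
    (hq : q ++ [true] <+: qsB a b c (N+1)) :
    (∃ j k q', (j < b N ∧ k < a N ∨ j = b N ∧ k = 0) ∧
        q = pref a b c N j ++ wpow (qsB a b c N ++ ones (c N + j)) k ++ q' ∧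
        q' ++ [true] <+: qsB a b c N) ∨
    (∃ j k t, (j < b N ∧ k < a N) ∧ t < c N + j ∧
        q = pref a b c N j ++ wpow (qsB a b c N ++ ones (c N + j)) k ++
          (qsB a b c N ++ ones t)) := by
  rw [qsB_succ a b c N hN] at hq
  rcases prefix_split hq with h1 | ⟨q', rfl, h2⟩
  · obtain ⟨j, k, r, hj, hk, rfl, h3⟩ := split_pref h1
    rcases prefix_split h3 with h4 | ⟨r', rfl, h5⟩
    · exact Or.inl ⟨j, k, r, Or.inl ⟨hj, hk⟩, rfl, h4⟩
    · right
      have hsub : r' <+: ones (c N + j) := (List.prefix_append r' [true]).trans h5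
      have hr' : r' = ones r'.length := sublist_ones hsub.sublist
      have hlen : r'.length + 1 ≤ c N + j := by
        have := h5.length_le; simp at this; omega
      refine ⟨j, k, r'.length, ⟨hj, hk⟩, by omega, ?_⟩
      conv_lhs => rw [hr']
  · exact Or.inl ⟨b N, 0, q', Or.inr ⟨rfl, rfl⟩, by simp, h2⟩

end Staircase


lemma zrun_peel {z r : ℕ} (hlt : z < r) :
    zrun r = [false] ++ ones (r - z - 1) ++ true :: ones z := by
  rw [zrun, ones_peel hlt]; simp

lemma zrun_cons {z : ℕ} (hz : 1 ≤ z) : zrun z = [false] ++ true :: ones (z - 1) := by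
  obtain ⟨z', rfl⟩ : ∃ z', z = z' + 1 := ⟨z - 1, by omega⟩
  rw [zrun, ones_succ]; simp


section Staircase2

variable {a b c : ℕ → ℕ}

lemma ctx_suffix {p p' X Y : List Bool} (hpe : p = X ++ Y ++ p') : p' <:+ p :=
  ⟨X ++ Y, by rw [hpe]⟩

lemma runs (h : QShyp a b c) {z : ℕ} :
    ∀ N : ℕ, ∀ p : List Bool, p ++ [false] <+: qsB a b c N → zrun z <:+ p →
      ∃ n i, 1 ≤ n ∧ i < b n ∧ z = c n + i := by
  intro N
  induction N using Nat.strong_induction_on with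
  | h N IH =>
    match N with
    | 0 =>
      intro p hp hz; exfalso
      have hl := hp.length_le
      have hz' := hz.length_le
      simp only [qsB, List.length_append, List.length_cons, List.length_nil,
        length_zrun] at hl hz'
      omega
    | 1 =>
      intro p hp hz; exfalso
      have hl := hp.length_le
      have hz' := hz.length_le
      simp only [qsB, List.length_append, List.length_cons, List.length_nil,
        length_zrun] at hl hz'
      omega
    | (M+2) =>
      intro p hp hz
      have hM : 1 ≤ M + 1 := by omega
      obtain ⟨j, k₀, p', hjk, hpe, hp'⟩ := split0 h hM hp
      by_cases hpnil : p' = []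
      · subst hpnil
        rcases Nat.eq_zero_or_pos k₀ with rfl | hk₀
        · rcases Nat.eq_zero_or_pos j with rfl | hj
          · exfalso
            rw [hpe] at hz
            have h2 := hz.length_le
            have h3 : (pref a b c (M+1) 0 ++
                wpow (qsB a b c (M+1) ++ ones (c (M+1) + 0)) 0 ++ ([] : List Bool)).length
                = 0 := by simp
            rw [h3, length_zrun] at h2
            omega
          · obtain ⟨j', rfl⟩ : ∃ j', j = j' + 1 := ⟨j - 1, by omega⟩
            have hpe' : p = pref a b c (M+1) (j'+1) := by rw [hpe]; simp
            have hend : zrun (c (M+1) + j') <:+ p := by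
              rw [hpe']
              simpa using pref_ends h hM (show 1 ≤ j'+1 by omega)
            have hzz := zrun_suffix_unique hz hend
            have hjb : j' < b (M+1) := by rcases hjk with ⟨h1, _⟩ | ⟨h1, _⟩ <;> omega
            exact ⟨M+1, j', hM, hjb, hzz⟩
        · have hjb : j < b (M+1) := by rcases hjk with ⟨h1, _⟩ | ⟨_, h2⟩ <;> omega
          have hpe' : p = pref a b c (M+1) j ++
              wpow (qsB a b c (M+1) ++ ones (c (M+1) + j)) k₀ := by rw [hpe]; simp
          have hend : zrun (c (M+1) + j) <:+ p := by
            rw [hpe']; exact ctx_ends_pos h hM hk₀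
          exact ⟨M+1, j, hM, hjb, zrun_suffix_unique hz hend⟩
      · have hsub : p' <:+ p := ctx_suffix hpe
        obtain ⟨Y, hY⟩ := B_head h (M+1) hM
        have hd := prefix_head (hY ▸ ((List.prefix_append p' [false]).trans hp')) hpnil
        have hz' := zrun_transfer hsub hz hd
        exact IH (M+1) (by omega) p' hp' hz'

lemma tnf0 (h : QShyp a b c) {n i : ℕ} (hn : 1 ≤ n) (hi : i < b n) :
    ∀ N : ℕ, ∀ p : List Bool, p ++ [false] <+: qsB a b c N → zrun (c n + i) <:+ p →
      ∃ k P, 1 ≤ k ∧ k ≤ a n ∧ p = P ++ wpow (qsB a b c n ++ ones (c n + i)) k ∧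
        Pcond b c n i P := by
  intro N
  induction N using Nat.strong_induction_on with
  | h N IH =>
    match N with
    | 0 =>
      intro p hp hz; exfalso
      have hl := hp.length_le
      have hz' := hz.length_le
      simp only [qsB, List.length_append, List.length_cons, List.length_nil,
        length_zrun] at hl hz'
      omega
    | 1 =>
      intro p hp hz; exfalso
      have hl := hp.length_le
      have hz' := hz.length_le
      simp only [qsB, List.length_append, List.length_cons, List.length_nil,
        length_zrun] at hl hz'
      omega
    | (M+2) =>
      intro p hp hz
      have hM : 1 ≤ M + 1 := by omega
      obtain ⟨j, k₀, p', hjk, hpe, hp'⟩ := split0 h hM hp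
      by_cases hpnil : p' = []
      · subst hpnil
        rcases Nat.eq_zero_or_pos k₀ with rfl | hk₀
        · rcases Nat.eq_zero_or_pos j with rfl | hj
          · exfalso
            rw [hpe] at hz
            have h2 := hz.length_le
            have h3 : (pref a b c (M+1) 0 ++
                wpow (qsB a b c (M+1) ++ ones (c (M+1) + 0)) 0 ++ ([] : List Bool)).length
                = 0 := by simp
            rw [h3, length_zrun] at h2
            omega
          · obtain ⟨j', rfl⟩ : ∃ j', j = j' + 1 := ⟨j - 1, by omega⟩
            have hpe' : p = pref a b c (M+1) (j'+1) := by rw [hpe]; simp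
            have hend : zrun (c (M+1) + j') <:+ p := by
              rw [hpe']
              simpa using pref_ends h hM (show 1 ≤ j'+1 by omega)
            have hzz := zrun_suffix_unique hz hend
            have hjb : j' < b (M+1) := by rcases hjk with ⟨h1, _⟩ | ⟨h1, _⟩ <;> omega
            obtain ⟨rfl, rfl⟩ := uniq h hn hM hi hjb hzz
            refine ⟨a (M+1), pref a b c (M+1) i, a_pos h hM, le_rfl, ?_, ?_⟩
            · rw [hpe', pref_succ]
            · rcases Nat.eq_zero_or_pos i with rfl | hj1
              · exact Or.inl ⟨rfl, rfl⟩
              · refine Or.inr (Or.inl ⟨hj1, ?_⟩)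
                have h2 := pref_ends h hM hj1
                rwa [show c (M+1) + i - 1 = c (M+1) + (i-1) by omega]
        · have hjb : j < b (M+1) ∧ k₀ < a (M+1) := by
            rcases hjk with h1 | ⟨_, h2⟩
            · exact h1
            · omega
          have hpe' : p = pref a b c (M+1) j ++
              wpow (qsB a b c (M+1) ++ ones (c (M+1) + j)) k₀ := by rw [hpe]; simp
          have hend : zrun (c (M+1) + j) <:+ p := by
            rw [hpe']; exact ctx_ends_pos h hM hk₀
          have hzz := zrun_suffix_unique hz hend
          obtain ⟨rfl, rfl⟩ := uniq h hn hM hi hjb.1 hzz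
          refine ⟨k₀, pref a b c (M+1) i, hk₀, le_of_lt hjb.2, hpe', ?_⟩
          rcases Nat.eq_zero_or_pos i with rfl | hj'
          · exact Or.inl ⟨rfl, rfl⟩
          · refine Or.inr (Or.inl ⟨hj', ?_⟩)
            have h2 := pref_ends h hM hj'
            rwa [show c (M+1) + i - 1 = c (M+1) + (i-1) by omega]
      · have hsub : p' <:+ p := ctx_suffix hpe
        obtain ⟨Y, hY⟩ := B_head h (M+1) hM
        have hd := prefix_head (hY ▸ ((List.prefix_append p' [false]).trans hp')) hpnil
        have hz' := zrun_transfer hsub hz hd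
        obtain ⟨k, P', hk1, hk2, hp'eq, hPc⟩ := IH (M+1) (by omega) p' hp' hz'
        refine ⟨k, pref a b c (M+1) j ++ wpow (qsB a b c (M+1) ++ ones (c (M+1) + j)) k₀
            ++ P', hk1, hk2, by rw [hpe, hp'eq]; simp [List.append_assoc], ?_⟩
        have hnM : n < M + 1 := by
          by_contra hcon
          push_neg at hcon
          have hlB : (qsB a b c (M+1)).length ≤ (qsB a b c n).length :=
            (B_suffix_le hM hcon).length_le
          have hl1 := hp'.length_le
          rw [hp'eq] at hl1
          simp only [List.length_append, List.length_cons, List.length_nil, length_wpow,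
            length_ones] at hl1
          have h2 : 1 * ((qsB a b c n).length + (c n + i)) ≤
              k * ((qsB a b c n).length + (c n + i)) := Nat.mul_le_mul_right _ hk1
          omega
        rcases hPc with ⟨hP'nil, hi0⟩ | ⟨hipos, hPs⟩ | ⟨hi0, e, he, hPs⟩
        · subst hP'nil; subst hi0
          simpa using Pcond_ctx h hn hM hnM hjk
        · exact Or.inr (Or.inl ⟨hipos, hPs.trans (List.suffix_append _ _)⟩)
        · exact Or.inr (Or.inr ⟨hi0, e, he, hPs.trans (List.suffix_append _ _)⟩)

lemma sufrun (h : QShyp a b c) {n : ℕ} (hn : 1 ≤ n) :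
    ∀ N : ℕ, n + 1 ≤ N → ∃ Y, qsB a b c N = Y ++ qsB a b c (n+1) ∧
      (Y = [] ∨ ∃ e, c (n+1) ≤ e ∧ zrun e <:+ Y) := by
  intro N hN
  induction N, hN using Nat.le_induction with
  | base => exact ⟨[], by simp, Or.inl rfl⟩
  | succ m hm ih =>
      obtain ⟨Y, hY, hYr⟩ := ih
      have hm1 : 1 ≤ m := by omega
      refine ⟨pref a b c m (b m) ++ Y,
        by rw [qsB_succ a b c m hm1, hY, List.append_assoc], Or.inr ?_⟩
      rcases hYr with rfl | ⟨e, he, hse⟩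
      · refine ⟨c m + (b m - 1), ?_, by
          simpa using pref_ends h hm1 (b_pos h hm1)⟩
        have := c_mono h (show 1 ≤ n+1 by omega) hm
        omega
      · exact ⟨e, he, hse.trans (List.suffix_append _ _)⟩

lemma tnf1 (h : QShyp a b c) {n i : ℕ} (hn : 1 ≤ n) (hi : i < b n) :
    ∀ N : ℕ, ∀ q : List Bool, q ++ [true] <+: qsB a b c N → zrun (c n + i) <:+ q →
      (∃ Q r, c n + i < r ∧ r < c n + b n ∧ zrun r <:+ Q ∧
          q = Q ++ (qsB a b c n ++ ones (c n + i))) ∨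
      (∃ Q, q = Q ++ wpow (qsB a b c n ++ ones (c n + i)) (a n + 1) ∧ Pcond b c n i Q) := by
  intro N
  induction N using Nat.strong_induction_on with
  | h N IH =>
    match N with
    | 0 =>
      intro q hq hz; exfalso
      have hl := hq.length_le
      have hz' := hz.length_le
      simp only [qsB, List.length_append, List.length_cons, List.length_nil,
        length_zrun] at hl hz'
      omega
    | 1 =>
      intro q hq hz; exfalso
      have hl := hq.length_le
      have hz' := hz.length_le
      simp only [qsB, List.length_append, List.length_cons, List.length_nil,
        length_zrun] at hl hz'
      omega
    | (M+2) =>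
      intro q hq hz
      have hM : 1 ≤ M + 1 := by omega
      rcases split1 h hM hq with ⟨j, k₀, q', hjk, hqe, hq'⟩ | ⟨j, k₀, t, ⟨hj, hk₀⟩, ht, hqe⟩
      · -- the `1` lies inside an inner copy of B (M+1)
        have hqne : q' ≠ [] := by
          intro hnil
          subst hnil
          obtain ⟨Y, hY⟩ := B_head h (M+1) hM
          rcases hq' with ⟨s, hs⟩
          rw [hY] at hs
          simp at hs
        have hsub : q' <:+ q := ctx_suffix hqe
        obtain ⟨Y, hY⟩ := B_head h (M+1) hM
        have hd := prefix_head (hY ▸ ((List.prefix_append q' [true]).trans hq')) hqne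
        have hz' := zrun_transfer hsub hz hd
        rcases IH (M+1) (by omega) q' hq' hz' with ⟨Q', r, hr1, hr2, hrs, hq'eq⟩ |
          ⟨Q', hq'eq, hPc⟩
        · left
          exact ⟨pref a b c (M+1) j ++ wpow (qsB a b c (M+1) ++ ones (c (M+1) + j)) k₀
              ++ Q', r, hr1, hr2, hrs.trans (List.suffix_append _ _),
              by rw [hqe, hq'eq]; simp [List.append_assoc]⟩
        · right
          have hnM : n < M + 1 := by
            by_contra hcon
            push_neg at hcon
            have hlB : (qsB a b c (M+1)).length ≤ (qsB a b c n).length :=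
              (B_suffix_le hM hcon).length_le
            have hl1 := hq'.length_le
            rw [hq'eq] at hl1
            simp only [List.length_append, List.length_cons, List.length_nil, length_wpow,
              length_ones] at hl1
            have h2 : 1 * ((qsB a b c n).length + (c n + i)) ≤
                (a n + 1) * ((qsB a b c n).length + (c n + i)) :=
              Nat.mul_le_mul_right _ (by omega)
            omega
          refine ⟨pref a b c (M+1) j ++ wpow (qsB a b c (M+1) ++ ones (c (M+1) + j)) k₀
              ++ Q', by rw [hqe, hq'eq]; simp [List.append_assoc], ?_⟩
          rcases hPc with ⟨hQ'nil, hi0⟩ | ⟨hipos, hQs⟩ | ⟨hi0, e, he, hQs⟩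
          · subst hQ'nil; subst hi0
            simpa using Pcond_ctx h hn hM hnM hjk
          · exact Or.inr (Or.inl ⟨hipos, hQs.trans (List.suffix_append _ _)⟩)
          · exact Or.inr (Or.inr ⟨hi0, e, he, hQs.trans (List.suffix_append _ _)⟩)
      · -- the `1` lies in a run just after a copy of B (M+1)
        obtain ⟨X, hX⟩ := B_last (M+1) hM
        have hzt : zrun t <:+ q := by
          refine ⟨pref a b c (M+1) j ++ wpow (qsB a b c (M+1) ++ ones (c (M+1) + j)) k₀
              ++ X, ?_⟩
          rw [hqe]
          nth_rewrite 3 [hX]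
          simp [zrun, List.append_assoc]
        have htz : t = c n + i := zrun_suffix_unique hzt hz
        subst htz
        have hnM : n ≤ M + 1 := by
          by_contra hcon
          push_neg at hcon
          have h1 : c (M+2) ≤ c n := c_mono h (by omega) hcon
          have h2 : c (M+1) + b (M+1) ≤ c (M+2) := c_step h hM
          have h3 : j < b (M+1) := hj
          omega
        rcases eq_or_lt_of_le hnM with heq | hlt
        · -- n = M + 1
          rw [← heq] at hqe hj ht
          have hij : i < j := by omega
          rcases Nat.eq_zero_or_pos k₀ with rfl | hk₀pos
          · have hq2 : q = pref a b c n j ++ (qsB a b c n ++ ones (c n + i)) := by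
              rw [hqe]; simp
            rcases Nat.lt_or_ge (i+1) j with hj2 | hj2
            · left
              have hj1 : 1 ≤ j := by omega
              refine ⟨pref a b c n j, c n + (j-1), by omega, by omega, ?_, hq2⟩
              exact pref_ends h hn hj1
            · have hji : j = i + 1 := by omega
              subst hji
              right
              refine ⟨pref a b c n i, ?_, ?_⟩
              · rw [hq2, pref_succ, wpow_succ']
                simp [List.append_assoc]
              · rcases Nat.eq_zero_or_pos i with rfl | hipos
                · exact Or.inl ⟨rfl, rfl⟩
                · refine Or.inr (Or.inl ⟨hipos, ?_⟩)
                  have h2 := pref_ends h hn hipos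
                  rwa [show c n + i - 1 = c n + (i-1) by omega]
          · left
            refine ⟨pref a b c n j ++ wpow (qsB a b c n ++ ones (c n + j)) k₀,
              c n + j, by omega, by omega, ctx_ends_pos h hn hk₀pos, by rw [hqe]⟩
        · -- n < M + 1
          obtain ⟨Y, hBY, hYr⟩ := sufrun h hn (M+1) (by omega)
          have hBn1 : qsB a b c (n+1) = pref a b c n (b n) ++ qsB a b c n :=
            qsB_succ a b c n hn
          rcases Nat.lt_or_ge (i+1) (b n) with hib | hib
          · left
            have hbn : 1 ≤ b n := b_pos h hn
            refine ⟨pref a b c (M+1) j ++ wpow (qsB a b c (M+1) ++ ones (c (M+1) + j)) k₀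
                ++ Y ++ pref a b c n (b n), c n + (b n - 1), by omega, by omega,
              (pref_ends h hn hbn).trans (List.suffix_append _ _), ?_⟩
            rw [hqe, hBY, hBn1]
            simp [List.append_assoc]
          · have hbi : b n = i + 1 := by omega
            right
            refine ⟨pref a b c (M+1) j ++ wpow (qsB a b c (M+1) ++ ones (c (M+1) + j)) k₀
                ++ Y ++ pref a b c n i, ?_, ?_⟩
            · rw [hqe, hBY, hBn1, hbi, pref_succ, wpow_succ']
              simp [List.append_assoc]
            · rcases Nat.eq_zero_or_pos i with rfl | hipos
              · rcases hYr with rfl | ⟨e, he, hse⟩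
                · rcases Nat.eq_zero_or_pos k₀ with rfl | hk₀pos
                  · rcases Nat.eq_zero_or_pos j with rfl | hjpos
                    · exact Or.inl ⟨by simp, rfl⟩
                    · refine Or.inr (Or.inr ⟨rfl, c (M+1) + (j-1), ?_, ?_⟩)
                      · have := c_big h hn hlt; omega
                      · simpa using pref_ends h hM hjpos
                  · refine Or.inr (Or.inr ⟨rfl, c (M+1) + j, ?_, ?_⟩)
                    · have := c_big h hn hlt; omega
                    · simpa using ctx_ends_pos h hM hk₀pos
                · refine Or.inr (Or.inr ⟨rfl, e, ?_, ?_⟩)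
                  · have := c_step h hn; omega
                  · simp only [pref_zero, List.append_nil]
                    exact hse.trans (List.suffix_append _ _)
              · refine Or.inr (Or.inl ⟨hipos, ?_⟩)
                refine List.IsSuffix.trans ?_ (List.suffix_append _ _)
                have h2 := pref_ends h hn hipos
                rwa [show c n + i - 1 = c n + (i-1) by omega]

end Staircase2



section Final

variable {a b c : ℕ → ℕ}

lemma final (h : QShyp a b c) {n i : ℕ} (hn : 1 ≤ n) (hi : i < b n) {w p q : List Bool}
    (hwp : w <:+ p) (hwq : w <:+ q)
    (hp : ∃ k P, 1 ≤ k ∧ k ≤ a n ∧ p = P ++ wpow (qsB a b c n ++ ones (c n + i)) k ∧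
        Pcond b c n i P)
    (hq : (∃ Q r, c n + i < r ∧ r < c n + b n ∧ zrun r <:+ Q ∧
          q = Q ++ (qsB a b c n ++ ones (c n + i))) ∨
        (∃ Q, q = Q ++ wpow (qsB a b c n ++ ones (c n + i)) (a n + 1) ∧ Pcond b c n i Q)) :
    (∃ n', 1 ≤ n' ∧ ∃ i', i' < b n' ∧
        w <:+ ones (c n' + i' - 1) ++ wpow (qsB a b c n' ++ ones (c n' + i')) (a n')) ∨
    (∃ n', 1 ≤ n' ∧ w <:+ ones (c n' + b n' - 1) ++ qsB a b c n' ++ ones (c n')) ∨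
    (∃ n', 1 ≤ n' ∧ w = ones (c n') ++ wpow (qsB a b c n' ++ ones (c n')) (a n')) := by
  obtain ⟨k, P, hk1, hk2, hpe, hPc⟩ := hp
  obtain ⟨X, hXB⟩ := B_last n hn
  set Bl : List Bool := qsB a b c n ++ ones (c n + i) with hBldef
  have hBl : Bl = X ++ zrun (c n + i) := by
    rw [hBldef, hXB, zrun]; simp
  have hz1 : 1 ≤ c n + i := by have := c_pos h hn; omega
  have han : 1 ≤ a n := a_pos h hn
  have hA : ∀ m : ℕ, m ≤ a n → wpow Bl m <:+ wpow Bl (a n) := by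
    intro m hm
    exact ⟨wpow Bl (a n - m), by rw [← wpow_add]; congr 1; omega⟩
  have hform2 : ∀ m : ℕ, m ≤ a n → wpow Bl m <:+ ones (c n + i - 1) ++ wpow Bl (a n) :=
    fun m hm => (hA m hm).trans (List.suffix_append _ _)
  have hOB : ∀ T : List Bool, ones (c n + i) ++ T <:+ Bl ++ T := by
    intro T
    refine ⟨X ++ [false], ?_⟩
    rw [hBl, zrun]
    simp [List.append_assoc]
  have hB : ∀ t m : ℕ, t ≤ c n + i → m < a n →
      ones t ++ wpow Bl m <:+ ones (c n + i - 1) ++ wpow Bl (a n) := by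
    intro t m ht hm
    refine (peel _ ht).trans ?_
    refine (hOB _).trans ?_
    rw [show Bl ++ wpow Bl m = wpow Bl (m+1) from (wpow_succ _ _).symm]
    exact hform2 _ (by omega)
  have hC : ∀ t m : ℕ, t + 1 ≤ c n + i → m ≤ a n →
      ones t ++ wpow Bl m <:+ ones (c n + i - 1) ++ wpow Bl (a n) := by
    intro t m ht hm
    rcases eq_or_lt_of_le hm with rfl | hm'
    · exact peel _ (by omega)
    · exact hB t m (by omega) hm'
  rcases hq with ⟨Q, r, hr1, hr2, hrs, hqe⟩ | ⟨Q, hqe, hQc⟩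
  · -- q has exactly one block, preceded by a full run of length r ≠ c n + i
    obtain ⟨Q₀, hQ₀⟩ := hrs
    rcases Nat.lt_or_ge k 2 with hklt2 | hk2
    · -- k = 1
      have hk1' : k = 1 := by omega
      subst hk1'
      rcases hPc with ⟨rfl, hi0⟩ | ⟨hipos, hPs⟩ | ⟨hi0, e, he, hPs⟩
      · left
        refine ⟨n, hn, i, hi, hwp.trans ?_⟩
        rw [hpe]
        simpa using hform2 1 han
      · obtain ⟨P₀, hP₀⟩ := hPs
        have hsp : p = P₀ ++ false :: (ones (c n + i - 1) ++ Bl) := by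
          rw [hpe, ← hP₀, wpow_one]; simp [zrun, List.append_assoc]
        have hsq : q = (Q₀ ++ [false] ++ ones (r - (c n + i - 1) - 1)) ++
            true :: (ones (c n + i - 1) ++ Bl) := by
          rw [hqe, ← hQ₀, zrun_peel (show c n + i - 1 < r by omega)]
          simp [List.append_assoc]
        have hw' := mismatch (hsp ▸ hwp) (hsq ▸ hwq) (by simp)
        left
        refine ⟨n, hn, i, hi, hw'.trans ?_⟩
        simpa [wpow_one] using hC (c n + i - 1) 1 (by omega) han
      · obtain ⟨P₀, hP₀⟩ := hPs
        have hsp : p = (P₀ ++ [false] ++ ones (e - r - 1)) ++ true :: (ones r ++ Bl) := by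
          rw [hpe, ← hP₀, wpow_one, zrun_peel (show r < e by omega)]
          simp [List.append_assoc]
        have hsq : q = Q₀ ++ false :: (ones r ++ Bl) := by
          rw [hqe, ← hQ₀]; simp [zrun, List.append_assoc]
        have hw' := mismatch (hsq ▸ hwq) (hsp ▸ hwp) (by simp)
        right; left
        refine ⟨n, hn, ?_⟩
        have hkey : ones (c n + b n - 1) ++ qsB a b c n ++ ones (c n) =
            ones (c n + b n - 1) ++ Bl := by
          rw [hBldef, hi0]; simp [List.append_assoc]
        rw [hkey]
        exact hw'.trans (peel _ (by omega))
    · -- k ≥ 2 : block boundary in p against the long run r in q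
      have hsp : p = (P ++ wpow Bl (k-2) ++ X) ++ false :: (ones (c n + i) ++ Bl) := by
        rw [hpe]
        conv_lhs => rw [show k = k-2+1+1 by omega, wpow_add, wpow_add, wpow_one]
        nth_rewrite 2 [hBl]
        simp [zrun, List.append_assoc]
      have hsq : q = (Q₀ ++ [false] ++ ones (r - (c n + i) - 1)) ++
          true :: (ones (c n + i) ++ Bl) := by
        rw [hqe, ← hQ₀, zrun_peel hr1]
        simp [List.append_assoc]
      have hw' := mismatch (hsp ▸ hwp) (hsq ▸ hwq) (by simp)
      left
      refine ⟨n, hn, i, hi, hw'.trans ?_⟩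
      simpa [wpow_one] using hB (c n + i) 1 le_rfl (by omega)
  · -- q has a n + 1 blocks
    rcases hPc with ⟨rfl, hi0⟩ | ⟨hipos, hPs⟩ | ⟨hi0, e, he, hPs⟩
    · left
      refine ⟨n, hn, i, hi, hwp.trans ?_⟩
      rw [hpe]
      simpa using hform2 k hk2
    · obtain ⟨P₀, hP₀⟩ := hPs
      have hsp : p = P₀ ++ false :: (ones (c n + i - 1) ++ wpow Bl k) := by
        rw [hpe, ← hP₀]; simp [zrun, List.append_assoc]
      have hsq : q = (Q ++ wpow Bl (a n - k) ++ X ++ [false]) ++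
          true :: (ones (c n + i - 1) ++ wpow Bl k) := by
        rw [hqe]
        conv_lhs => rw [show a n + 1 = a n - k + 1 + k by omega, wpow_add, wpow_add, wpow_one]
        nth_rewrite 2 [hBl]
        rw [zrun_cons hz1]
        simp [List.append_assoc]
      have hw' := mismatch (hsp ▸ hwp) (hsq ▸ hwq) (by simp)
      left
      exact ⟨n, hn, i, hi, hw'.trans (hC (c n + i - 1) k (by omega) hk2)⟩
    · obtain ⟨P₀, hP₀⟩ := hPs
      have hbn : 1 ≤ b n := b_pos h hn
      have hsp : p = (P₀ ++ [false] ++ ones (e - (c n + i) - 1)) ++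
          true :: (ones (c n + i) ++ wpow Bl k) := by
        rw [hpe, ← hP₀, zrun_peel (show c n + i < e by omega)]
        simp [List.append_assoc]
      have hsq : q = (Q ++ wpow Bl (a n - k) ++ X) ++
          false :: (ones (c n + i) ++ wpow Bl k) := by
        rw [hqe]
        conv_lhs => rw [show a n + 1 = a n - k + 1 + k by omega, wpow_add, wpow_add, wpow_one]
        nth_rewrite 2 [hBl]
        simp [zrun, List.append_assoc]
      have hw' := mismatch (hsq ▸ hwq) (hsp ▸ hwp) (by simp)
      by_cases hwT : w = ones (c n + i) ++ wpow Bl k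
      · rcases eq_or_lt_of_le hk2 with rfl | hklt
        · right; right
          refine ⟨n, hn, ?_⟩
          rw [hwT, hBldef, hi0]
          simp
        · left
          exact ⟨n, hn, i, hi, hwT ▸ hB (c n + i) k le_rfl hklt⟩
      · rcases eq_or_lt_of_le hk2 with rfl | hklt
        · left
          refine ⟨n, hn, i, hi, suffix_of_suffix_le hw' (peel _ (by omega)) ?_⟩
          have hlt : w.length < (ones (c n + i) ++ wpow Bl (a n)).length :=
            lt_of_le_of_ne hw'.length_le (fun hl => hwT (hw'.eq_of_length hl))
          simp only [List.length_append, length_ones, hBldef] at hlt ⊢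
          omega
        · left
          exact ⟨n, hn, i, hi, hw'.trans (hB (c n + i) k le_rfl hklt)⟩

end Final


end QS

/-- Every right-special word of the quasi-staircase subshift has (at least) one of the
four forms: (i) `1^{|w|}`; (ii) a suffix of `1^{c n + i - 1} (B n 1^{c n + i})^{a n}`
for some `n ≥ 1`, `0 ≤ i < b n`; (iii) a suffix of `1^{c n + b n - 1} B n 1^{c n}`
for some `n ≥ 1`; (iv) `1^{c n} (B n 1^{c n})^{a n}` for some `n ≥ 1`. -/
theorem qs_right_special_forms (a b c : ℕ → ℕ) (hQS : QShyp a b c)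
    (w : List Bool) (hw : RS a b c w) :
    w = ones w.length ∨
    (∃ n, 1 ≤ n ∧ ∃ i, i < b n ∧
      w <:+ ones (c n + i - 1) ++ wpow (qsB a b c n ++ ones (c n + i)) (a n)) ∨
    (∃ n, 1 ≤ n ∧ w <:+ ones (c n + b n - 1) ++ qsB a b c n ++ ones (c n)) ∨
    (∃ n, 1 ≤ n ∧ w = ones (c n) ++ wpow (qsB a b c n ++ ones (c n)) (a n)) := by
  obtain ⟨-, hw0, hw1⟩ := hw
  rcases QS.tail_decomp w with hone | ⟨u, z, rfl⟩
  · exact Or.inl hone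
  obtain ⟨N, hN, s, t, hst⟩ := hw0
  have hp : (s ++ (u ++ QS.zrun z)) ++ [false] <+: qsB a b c N :=
    ⟨t, by rw [← hst]; simp [List.append_assoc]⟩
  have hwp : u ++ QS.zrun z <:+ s ++ (u ++ QS.zrun z) := ⟨s, rfl⟩
  have hzw : QS.zrun z <:+ u ++ QS.zrun z := List.suffix_append _ _
  have hzp := hzw.trans hwp
  obtain ⟨n, i, hn, hi, hzz⟩ := QS.runs hQS N _ hp hzp
  subst hzz
  obtain ⟨M, hM, s', t', hst'⟩ := hw1
  have hq : (s' ++ (u ++ QS.zrun (c n + i))) ++ [true] <+: qsB a b c M :=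
    ⟨t', by rw [← hst']; simp [List.append_assoc]⟩
  have hwq : u ++ QS.zrun (c n + i) <:+ s' ++ (u ++ QS.zrun (c n + i)) := ⟨s', rfl⟩
  have hzq := hzw.trans hwq
  have h0 := QS.tnf0 hQS hn hi N _ hp hzp
  have h1 := QS.tnf1 hQS hn hi M _ hq hzq
  rcases QS.final hQS hn hi hwp hwq h0 h1 with h2 | h3 | h4
  · exact Or.inr (Or.inl h2)
  · exact Or.inr (Or.inr (Or.inl h3))
  · exact Or.inr (Or.inr (Or.inr h4))
end

section
/- In the quasi-staircase subshift, the set of right-special words decomposes as follows: the sets W_n (n ≥ 1) are pairwise disjoint; every right-special word containing at least one 0 belongs to some W_n; every word of the form 1^ℓ (ℓ ≥ 1) is right-special; and no word 1^ℓ belongs to any W_n. -/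
open Filter MeasureTheory
open scoped ENNReal

section QSAux

lemma qs_wpow_succ {α : Type*} (v : List α) (n : ℕ) : wpow v (n+1) = v ++ wpow v n := by
  simp [wpow, List.replicate_succ]

lemma qs_ones_add (m n : ℕ) : ones (m+n) = ones m ++ ones n := List.replicate_add m n true

/-- Words of the form `0 1^{k₁} 0 1^{k₂} ⋯ 0` with all `kᵢ ≥ c1`. -/
inductive QSChain (c1 : ℕ) : List Bool → Prop
  | single : QSChain c1 [false]
  | cons (k : ℕ) (l : List Bool) : c1 ≤ k → QSChain c1 l → QSChain c1 (false :: (ones k ++ l))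

lemma QSChain.append {c1 k : ℕ} {l l' : List Bool} (h : QSChain c1 l) (h' : QSChain c1 l')
    (hk : c1 ≤ k) : QSChain c1 (l ++ ones k ++ l') := by
  induction h with
  | single => exact QSChain.cons k l' hk h'
  | cons k' l0 hk' h0 ih =>
      have heq : (false :: (ones k' ++ l0)) ++ ones k ++ l'
          = false :: (ones k' ++ (l0 ++ ones k ++ l')) := by simp
      rw [heq]
      exact QSChain.cons k' _ hk' ih

lemma QSChain.pow {c1 k : ℕ} {d rest : List Bool} (hd : QSChain c1 d) (hrest : QSChain c1 rest)
    (hk : c1 ≤ k) : ∀ A, QSChain c1 (wpow (d ++ ones k) A ++ rest)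
  | 0 => by simpa [wpow] using hrest
  | (A+1) => by
      rw [qs_wpow_succ]
      have := QSChain.append hd (QSChain.pow hd hrest hk A) hk
      simpa [List.append_assoc] using this

lemma QSChain.blocks {c1 : ℕ} (A : ℕ) {d tl : List Bool} (g : ℕ → ℕ) (hd : QSChain c1 d)
    (htl : QSChain c1 tl) :
    ∀ is : List ℕ, (∀ i ∈ is, c1 ≤ g i) →
      QSChain c1 ((is.map (fun i => wpow (d ++ ones (g i)) A)).flatten ++ tl)
  | [], _ => by simpa using htl
  | (i :: is), h => by
      have hrest : QSChain c1 ((is.map (fun i => wpow (d ++ ones (g i)) A)).flatten ++ tl) :=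
        QSChain.blocks A g hd htl is (fun j hj => h j (List.mem_cons_of_mem _ hj))
      have := QSChain.pow hd hrest (h i List.mem_cons_self) A
      simpa [List.append_assoc] using this

lemma qs_cmono (c : ℕ → ℕ) (hc : ∀ n, 1 ≤ n → c n ≤ c (n+1)) :
    ∀ m m', 1 ≤ m → m ≤ m' → c m ≤ c m' := by
  intro m m' hm hmm
  induction m' with
  | zero => omega
  | succ k ih =>
      rcases Nat.lt_or_ge m (k+1) with h | h
      · exact le_trans (ih (by omega)) (hc k (by omega))
      · have : m = k + 1 := by omega
        simp [this]

lemma qs_chain_B (a b c : ℕ → ℕ) (hc : ∀ n, 1 ≤ n → c n ≤ c (n+1)) :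
    ∀ n, 1 ≤ n → QSChain (c 1) (qsB a b c n) := by
  intro n hn
  induction n with
  | zero => omega
  | succ k ih =>
      rcases Nat.eq_or_lt_of_le hn with h | h
      · have hk0 : k = 0 := by omega
        subst hk0
        show QSChain (c 1) (qsB a b c 1)
        rw [show qsB a b c 1 = [false] from rfl]
        exact QSChain.single
      · have hk : 1 ≤ k := by omega
        have hB := ih hk
        obtain ⟨k', rfl⟩ : ∃ k', k = k' + 1 := ⟨k - 1, by omega⟩
        rw [show qsB a b c (k'+2) = ((List.range (b (k'+1))).map
            (fun i => wpow (qsB a b c (k'+1) ++ ones (c (k'+1) + i)) (a (k'+1)))).flatten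
            ++ qsB a b c (k'+1) from rfl]
        exact QSChain.blocks _ _ hB hB _
          (fun i _ => le_trans (qs_cmono c hc 1 (k'+1) le_rfl hk) (Nat.le_add_right _ _))

lemma qs_chain_no_bad {c1 z : ℕ} {l : List Bool} (h : QSChain c1 l)
    (hinf : (false :: (ones z ++ [false])) <:+: l) : c1 ≤ z := by
  induction h with
  | single =>
      have := hinf.length_le
      simp [ones] at this
  | cons k l0 hk h0 ih =>
      obtain ⟨s, t, hst⟩ := hinf
      match s with
      | [] =>
          rw [List.nil_append, List.cons_append] at hst
          obtain ⟨-, heq⟩ := List.cons_eq_cons.mp hst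
          rw [List.append_assoc] at heq
          by_contra hlt
          push_neg at hlt
          have hzk : z < k := lt_of_lt_of_le hlt hk
          have h1 : (ones z ++ ([false] ++ t))[z]? = some false := by
            rw [List.getElem?_append_right (by simp [ones])]
            simp [ones]
          rw [heq] at h1
          have h2 : (ones k ++ l0)[z]? = some true := by
            rw [List.getElem?_append_left (by simpa [ones] using hzk)]
            simp [ones, List.getElem?_replicate, hzk]
          rw [h2] at h1
          simp at h1
      | x :: s' =>
          rw [List.cons_append, List.cons_append] at hst
          obtain ⟨-, heq⟩ := List.cons_eq_cons.mp hst
          rw [List.append_assoc] at heq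
          -- heq : s' ++ ((false :: (ones z ++ [false])) ++ t) = ones k ++ l0
          have hk_le : k ≤ s'.length := by
            by_contra hle
            push_neg at hle
            have h1 : (s' ++ ((false :: (ones z ++ [false])) ++ t))[s'.length]? = some false := by
              rw [List.getElem?_append_right le_rfl]
              simp
            rw [heq] at h1
            have h2 : (ones k ++ l0)[s'.length]? = some true := by
              rw [List.getElem?_append_left (by simpa [ones] using hle)]
              simp [ones, List.getElem?_replicate, hle]
            rw [h2] at h1
            simp at h1
          have hmid : (false :: (ones z ++ [false])) <:+: l0 := by
            refine ⟨s'.drop k, t, ?_⟩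
            have hdrop := congrArg (List.drop k) heq
            rw [List.drop_append_of_le_length hk_le] at hdrop
            rw [show (ones k ++ l0).drop k = l0 from by
              simpa [ones] using List.drop_left (List.replicate k true) l0] at hdrop
            rw [← List.append_assoc] at hdrop
            exact hdrop
          exact ih hmid

lemma qs_ztail_decomp {w : List Bool} (hw : false ∈ w) :
    ∃ u, w = u ++ (false :: ones (ztail w)) := by
  set r := w.reverse with hr
  have hsplit : r.takeWhile id ++ r.dropWhile id = r := List.takeWhile_append_dropWhile
  have htake : r.takeWhile id = ones (ztail w) := by
    have hall : ∀ x ∈ r.takeWhile id, x = true := by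
      intro x hx
      simpa using List.mem_takeWhile_imp hx
    have := List.eq_replicate_of_mem hall
    simpa [ones, ztail, hr] using this
  have hne : r.dropWhile id ≠ [] := by
    intro h0
    have hall := List.dropWhile_eq_nil_iff.mp h0
    have hfr : false ∈ r := by rw [hr]; simpa using hw
    have := hall false hfr
    simp at this
  obtain ⟨x, r', hx⟩ := List.exists_cons_of_ne_nil hne
  have hxf : x = false := by
    have hnot := List.head_dropWhile_not id hne
    have hh : (r.dropWhile id).head hne = x := by
      have h1 : (r.dropWhile id).head? = some x := by rw [hx]; rfl
      rw [List.head?_eq_head hne] at h1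
      exact Option.some_injective _ h1
    rw [hh] at hnot
    simpa using hnot
  subst hxf
  refine ⟨r'.reverse, ?_⟩
  have hwrev : w = r.reverse := by simp [hr]
  conv_lhs => rw [hwrev, ← hsplit]
  rw [htake, hx]
  simp [ones, List.reverse_append]

lemma qs_starts_false (a b c : ℕ → ℕ) (ha : ∀ n, 1 ≤ n → 1 ≤ a n)
    (hb : ∀ n, 1 ≤ n → 1 ≤ b n) :
    ∀ n, 1 ≤ n → ∃ t, qsB a b c n = false :: t := by
  intro n hn
  induction n with
  | zero => omega
  | succ k ih =>
      rcases Nat.eq_or_lt_of_le hn with h | h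
      · have hk0 : k = 0 := by omega
        subst hk0
        exact ⟨[], rfl⟩
      · have hk : 1 ≤ k := by omega
        obtain ⟨t, ht⟩ := ih hk
        obtain ⟨k', rfl⟩ : ∃ k', k = k' + 1 := ⟨k - 1, by omega⟩
        obtain ⟨m, hm⟩ : ∃ m, b (k'+1) = m + 1 := ⟨b (k'+1) - 1, by have := hb (k'+1) hk; omega⟩
        obtain ⟨A, hA⟩ : ∃ A, a (k'+1) = A + 1 := ⟨a (k'+1) - 1, by have := ha (k'+1) hk; omega⟩
        rw [show qsB a b c (k'+2) = ((List.range (b (k'+1))).map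
            (fun i => wpow (qsB a b c (k'+1) ++ ones (c (k'+1) + i)) (a (k'+1)))).flatten
            ++ qsB a b c (k'+1) from rfl, hm, hA, List.range_succ_eq_map, List.map_cons,
            List.flatten_cons, qs_wpow_succ, ht]
        simp only [List.cons_append, List.append_assoc]
        exact ⟨_, rfl⟩

lemma qs_starts_false_cat {l1 l2 l3 : List Bool}
    (h1 : l1 = [] ∨ ∃ t, l1 = false :: t) (h2 : l2 = [] ∨ ∃ t, l2 = false :: t)
    (h3 : ∃ t, l3 = false :: t) : ∃ t, l1 ++ (l2 ++ l3) = false :: t := by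
  obtain ⟨t3, rfl⟩ := h3
  rcases h1 with rfl | ⟨t1, rfl⟩
  · rcases h2 with rfl | ⟨t2, rfl⟩
    · simp only [List.nil_append]
      exact ⟨_, rfl⟩
    · simp only [List.nil_append, List.cons_append]
      exact ⟨_, rfl⟩
  · simp only [List.cons_append]
    exact ⟨_, rfl⟩

lemma qs_B_split (a b c : ℕ → ℕ) (ha : ∀ n, 1 ≤ n → 1 ≤ a n)
    (hb : ∀ n, 1 ≤ n → 1 ≤ b n) (n : ℕ) (hn : 1 ≤ n) :
    ∃ t, qsB a b c (n+1) = qsB a b c n ++ ones (c n) ++ (false :: t) := by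
  obtain ⟨k, rfl⟩ : ∃ k, n = k + 1 := ⟨n - 1, by omega⟩
  obtain ⟨tB, htB⟩ := qs_starts_false a b c ha hb (k+1) hn
  obtain ⟨m, hm⟩ : ∃ m, b (k+1) = m + 1 := ⟨b (k+1) - 1, by have := hb (k+1) hn; omega⟩
  obtain ⟨A, hA⟩ : ∃ A, a (k+1) = A + 1 := ⟨a (k+1) - 1, by have := ha (k+1) hn; omega⟩
  set d := qsB a b c (k+1) with hd
  set f : ℕ → List Bool := fun i => wpow (d ++ ones (c (k+1) + i)) (a (k+1)) with hf
  have hkey : qsB a b c (k+2) = (d ++ ones (c (k+1) + 0)) ++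
      (wpow (d ++ ones (c (k+1) + 0)) A ++
        ((List.map f (List.map Nat.succ (List.range m))).flatten ++ d)) := by
    rw [show qsB a b c (k+2) = ((List.range (b (k+1))).map f).flatten ++ d from rfl,
      hm, List.range_succ_eq_map, List.map_cons, List.flatten_cons]
    rw [show f 0 = wpow (d ++ ones (c (k+1) + 0)) (A+1) from by rw [hf]; simp [hA], qs_wpow_succ]
    simp [List.append_assoc]
  have h1 : wpow (d ++ ones (c (k+1) + 0)) A = []
      ∨ ∃ t, wpow (d ++ ones (c (k+1) + 0)) A = false :: t := by
    match A with
    | 0 => exact Or.inl rfl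
    | (A'+1) =>
        right
        rw [qs_wpow_succ, htB]
        simp only [List.cons_append, List.append_assoc]
        exact ⟨_, rfl⟩
  have h2 : (List.map f (List.map Nat.succ (List.range m))).flatten = []
      ∨ ∃ t, (List.map f (List.map Nat.succ (List.range m))).flatten = false :: t := by
    match m with
    | 0 => exact Or.inl rfl
    | (m'+1) =>
        right
        rw [List.range_succ_eq_map, List.map_cons, List.map_cons, List.flatten_cons]
        rw [show f (Nat.succ 0) = wpow (d ++ ones (c (k+1) + Nat.succ 0)) (A+1) from by
          rw [hf]; simp [hA], qs_wpow_succ, htB]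
        simp only [List.cons_append, List.append_assoc]
        exact ⟨_, rfl⟩
  obtain ⟨t, hT⟩ := qs_starts_false_cat h1 h2 ⟨tB, htB⟩
  refine ⟨t, ?_⟩
  rw [hkey, hT]
  simp

end QSAux
/-- The decomposition of the right-special words of the quasi-staircase subshift:
the sets `W n` (`n ≥ 1`) are pairwise disjoint; every right-special word containing a
`0` lies in some `W n` with `n ≥ 1`; every `1^ℓ` (`ℓ ≥ 1`) is right-special; and no
`1^ℓ` lies in any `W n`. -/
theorem qs_right_special_decomposition (a b c : ℕ → ℕ) (hQS : QShyp a b c) :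
    (∀ n n' : ℕ, 1 ≤ n → 1 ≤ n' →
      ∀ w : List Bool, w ∈ Wn a b c n → w ∈ Wn a b c n' → n = n') ∧
    (∀ w : List Bool, RS a b c w → false ∈ w → ∃ n, 1 ≤ n ∧ w ∈ Wn a b c n) ∧
    (∀ ℓ : ℕ, 1 ≤ ℓ → RS a b c (ones ℓ)) ∧
    (∀ ℓ n : ℕ, ones ℓ ∉ Wn a b c n) := by
  obtain ⟨hA, -, hB, -, hC, hCt, -⟩ := hQS
  have ha : ∀ n, 1 ≤ n → 1 ≤ a n := fun n hn => (hA n hn).1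
  have hb : ∀ n, 1 ≤ n → 1 ≤ b n := fun n hn => (hB n hn).1
  have hcm : ∀ n, 1 ≤ n → c n ≤ c (n+1) := fun n hn => (hC n hn).2
  have cmono := qs_cmono c hcm
  refine ⟨?_, ?_, ?_, ?_⟩
  · -- disjointness
    intro n n' hn hn' w hw hw'
    obtain ⟨-, -, h1, h2⟩ := hw
    obtain ⟨-, -, h1', h2'⟩ := hw'
    by_contra hne
    rcases Nat.lt_or_ge n n' with h | h
    · have := cmono (n+1) n' (by omega) (by omega)
      omega
    · have hlt : n' < n := by omega
      have := cmono (n'+1) n (by omega) (by omega)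
      omega
  · -- every RS word with a 0 lies in some W n
    intro w hRS hw
    set z := ztail w with hz
    have hz1 : c 1 ≤ z := by
      obtain ⟨u, hu⟩ := qs_ztail_decomp hw
      obtain ⟨m, hm1, hminf⟩ := hRS.2.1
      have hbad : (false :: (ones z ++ [false])) <:+: qsB a b c m := by
        refine List.IsInfix.trans ⟨u, [], ?_⟩ hminf
        rw [hu]
        simp [hz]
      exact qs_chain_no_bad (qs_chain_B a b c hcm m hm1) hbad
    have hex : ∃ k, z < c (k+2) := by
      obtain ⟨N, hN⟩ := Filter.eventually_atTop.mp (hCt.eventually_gt_atTop z)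
      exact ⟨N, hN (N+2) (by omega)⟩
    have hspec : z < c (Nat.find hex + 2) := Nat.find_spec hex
    have hlow : c (Nat.find hex + 1) ≤ z := by
      rcases Nat.eq_zero_or_pos (Nat.find hex) with h0 | hpos
      · rw [h0]
        exact hz1
      · obtain ⟨j, hj⟩ : ∃ j, Nat.find hex = j + 1 := ⟨Nat.find hex - 1, by omega⟩
        have := Nat.find_min hex (show j < Nat.find hex by omega)
        rw [hj]
        show c (j + 2) ≤ z
        omega
    exact ⟨Nat.find hex + 1, by omega, hRS, hw, hlow, hspec⟩
  · -- 1^ℓ is right special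
    intro ℓ hℓ
    obtain ⟨N, hN⟩ := Filter.eventually_atTop.mp (hCt.eventually_ge_atTop (ℓ+1))
    set n := max N 1 with hn
    have hn1 : 1 ≤ n := le_max_right _ _
    have hcn : ℓ + 1 ≤ c n := hN n (le_max_left _ _)
    obtain ⟨t, ht⟩ := qs_B_split a b c ha hb n hn1
    refine ⟨⟨n+1, by omega, ?_⟩, ⟨n+1, by omega, ?_⟩, ⟨n+1, by omega, ?_⟩⟩
    · refine ⟨qsB a b c n, ones (c n - ℓ) ++ (false :: t), ?_⟩
      rw [ht, show ones (c n) = ones ℓ ++ ones (c n - ℓ) from by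
        rw [← qs_ones_add]; congr 1; omega]
      simp
    · refine ⟨qsB a b c n ++ ones (c n - ℓ), t, ?_⟩
      rw [ht, show ones (c n) = ones (c n - ℓ) ++ ones ℓ from by
        rw [← qs_ones_add]; congr 1; omega]
      simp
    · refine ⟨qsB a b c n, ones (c n - (ℓ+1)) ++ (false :: t), ?_⟩
      rw [ht, show ones (c n) = (ones ℓ ++ [true]) ++ ones (c n - (ℓ+1)) from by
        rw [show ones ℓ ++ [true] = ones (ℓ+1) from by
          simp [ones, List.replicate_succ'], ← qs_ones_add]
        congr 1; omega]
      simp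
  · -- no 1^ℓ lies in any W n
    intro ℓ n hmem
    have : false ∈ ones ℓ := hmem.2.1
    simp [ones] at this
end

section
/- Let (d_n) be a nondecreasing sequence of positive integers with d_n → ∞, d_1 = d_2 = 1, d_{n+1} − d_n ∈ {0,1} for all n, and d_{n+1} − d_n never equal to 1 for two consecutive values of n. Let (b_n) be a nondecreasing sequence of integers with b_n → ∞, b_1 = 3 and b_n ≤ n + 2 for all n. Set a_n = 2n + 2, c_1 = 1, and for n > 1 set c_n = m_{n−d_n} if d_n = d_{n−1} and c_n = c_{n−1} + b_{n−1} if d_n = d_{n−1} + 1, where h_1 = 1, h_{n+1} = (a_n b_n + 1)h_n + a_n b_n c_n + a_n b_n(b_n−1)/2 and m_n = a_n h_n + (a_n+1)(c_n + b_n − 1). Then c_{n+1} ≥ c_n + b_n for all n (so (a_n), (b_n), (c_n) define a quasi-staircase), a_n b_n² / h_n → 0, and Σ_n (c_n + b_n)/h_n < ∞. -/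
open Filter

set_option maxHeartbeats 1000000 in
/-- Given `(d n)` nondecreasing to infinity with `d 1 = d 2 = 1`, increments in
`{0,1}` and never two consecutive increments of `1`, and `(b n)` nondecreasing to
infinity with `b 1 = 3` and `b n ≤ n + 2`, setting `a n = 2n + 2`, `c 1 = 1` and,
for `n > 1`, `c n = m (n - d n)` when `d n = d (n-1)` and `c n = c (n-1) + b (n-1)`
when `d n = d (n-1) + 1` (where `h 1 = 1`,
`h (n+1) = (a n * b n + 1) * h n + a n * b n * c n + a n * b n * (b n - 1)/2` and
`m n = a n * h n + (a n + 1) * (c n + b n - 1)`), these sequences define a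
quasi-staircase: `c (n+1) ≥ c n + b n` for all `n ≥ 1`; moreover
`a n * b n ^ 2 / h n → 0` and `∑ (c n + b n)/h n < ∞`. -/
theorem qs_sequences_construction (d b : ℕ → ℕ)
    (hd1 : d 1 = 1) (hd2 : d 2 = 1)
    (hdpos : ∀ n, 1 ≤ n → 1 ≤ d n)
    (hdstep : ∀ n, 1 ≤ n → d n ≤ d (n+1) ∧ d (n+1) ≤ d n + 1)
    (hdnoconsec : ∀ n, 1 ≤ n → d (n+1) = d n + 1 → d (n+2) = d (n+1))
    (hdtop : Tendsto d atTop atTop)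
    (hb1 : b 1 = 3)
    (hbmono : ∀ n, 1 ≤ n → b n ≤ b (n+1))
    (hble : ∀ n, 1 ≤ n → b n ≤ n + 2)
    (hbtop : Tendsto b atTop atTop)
    (a c h m : ℕ → ℕ)
    (ha : ∀ n, a n = 2 * n + 2)
    (hh1 : h 1 = 1)
    (hh : ∀ n, 1 ≤ n →
      h (n+1) = (a n * b n + 1) * h n + a n * b n * c n + a n * b n * (b n - 1) / 2)
    (hm : ∀ n, m n = a n * h n + (a n + 1) * (c n + b n - 1))
    (hc1 : c 1 = 1)
    (hc : ∀ n, 1 < n →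
      c n = if d n = d (n-1) then m (n - d n) else c (n-1) + b (n-1)) :
    (∀ n, 1 ≤ n → c n + b n ≤ c (n+1)) ∧
    Tendsto (fun n => ((a n * b n ^ 2 : ℕ) : ℝ) / ((h n : ℕ) : ℝ)) atTop (nhds 0) ∧
    Summable (fun n => (((c n + b n : ℕ)) : ℝ) / ((h n : ℕ) : ℝ)) := by
  -- b n ≥ 3
  have hb3 : ∀ n, 1 ≤ n → 3 ≤ b n := by
    intro n hn
    induction n with
    | zero => omega
    | succ k ih =>
      rcases Nat.lt_or_ge 1 (k+1) with h1 | h1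
      · have hk : 1 ≤ k := by omega
        exact (ih hk).trans (hbmono k hk)
      · rw [show k + 1 = 1 by omega, hb1]
  -- 13 * h n ≤ h (n+1)
  have h13 : ∀ n, 1 ≤ n → 13 * h n ≤ h (n+1) := by
    intro n hn
    rw [hh n hn]
    have hb := hb3 n hn
    have hA : 12 ≤ a n * b n := by rw [ha]; nlinarith
    have : 13 * h n ≤ (a n * b n + 1) * h n :=
      Nat.mul_le_mul_right _ (by omega)
    omega
  have hpow : ∀ n, 1 ≤ n → 13 ^ (n-1) ≤ h n := by
    intro n hn
    induction n with
    | zero => omega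
    | succ k ih =>
      rcases Nat.lt_or_ge 1 (k+1) with h1 | h1
      · have hk : 1 ≤ k := by omega
        have h2 := h13 k hk
        have h3 := ih hk
        calc 13 ^ (k+1-1) = 13 * 13 ^ (k-1) := by
              rw [show k + 1 - 1 = (k-1) + 1 by omega, pow_succ]; ring
          _ ≤ 13 * h k := by omega
          _ ≤ h (k+1) := h2
      · rw [show k + 1 = 1 by omega, hh1]; norm_num
  have hpos : ∀ n, 1 ≤ n → 1 ≤ h n := by
    intro n hn
    have := hpow n hn
    have : 1 ≤ 13 ^ (n-1) := Nat.one_le_pow _ _ (by norm_num)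
    omega
  -- d jumps by at most 1 every two steps
  have hdjump : ∀ n, 1 ≤ n → d (n+2) ≤ d n + 1 := by
    intro n hn
    obtain ⟨h1, h2⟩ := hdstep n hn
    obtain ⟨h3, h4⟩ := hdstep (n+1) (by omega)
    have h4' : d (n+2) ≤ d (n+1) + 1 := h4
    rcases Nat.eq_or_lt_of_le h2 with he | hl
    · have h5 := hdnoconsec n hn he
      omega
    · omega
  have hd2le : ∀ n, 1 ≤ n → 2 * d n ≤ n + 1 := by
    intro n
    induction n using Nat.strong_induction_on with
    | _ n ih =>
      intro hn
      rcases n with _ | _ | _ | k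
      · omega
      · rw [hd1]
      · rw [hd2]; omega
      · have h1 := hdjump (k+1) (by omega)
        have h1' : d (k+1+1+1) ≤ d (k+1) + 1 := h1
        have h2 := ih (k+1) (by omega) (by omega)
        omega
  have hdle : ∀ n, 2 ≤ n → d n + 1 ≤ n := by
    intro n hn
    rcases Nat.eq_or_lt_of_le hn with h1 | h1
    · rw [← h1, hd2]
    · have := hd2le n (by omega); omega
  -- structure of c
  have hS : ∀ n, 2 ≤ n → c n ≤ m (n - d n) + b (n-1) := by
    intro n hn
    have hcn := hc n (by omega)
    by_cases hcase : d n = d (n-1)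
    · rw [hcn, if_pos hcase]; exact Nat.le_add_right _ _
    · rw [hcn, if_neg hcase]
      have hstep := hdstep (n-1) (by omega)
      rw [show n - 1 + 1 = n by omega] at hstep
      have hdn : d n = d (n-1) + 1 := by omega
      have hn3 : 3 ≤ n := by
        rcases Nat.eq_or_lt_of_le hn with h1 | h1
        · exfalso; apply hcase; rw [← h1] at *
          rw [show (2:ℕ) - 1 = 1 from rfl, hd2, hd1]
        · omega
      have hprev : d (n-1) = d (n-2) := by
        by_contra hne
        have hstep2 := hdstep (n-2) (by omega)
        rw [show n - 2 + 1 = n - 1 by omega] at hstep2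
        have he : d (n-2+1) = d (n-2) + 1 := by
          rw [show n - 2 + 1 = n - 1 by omega]; omega
        have := hdnoconsec (n-2) (by omega) he
        rw [show n-2+2 = n by omega, show n-2+1 = n-1 by omega] at this
        exact hcase this
      have hcn1 := hc (n-1) (by omega)
      rw [show n - 1 - 1 = n - 2 by omega, if_pos hprev] at hcn1
      have hdlen : d (n-1) + 1 ≤ n - 1 := hdle (n-1) (by omega)
      have hidx : n - 1 - d (n-1) = n - d n := by omega
      rw [hidx] at hcn1
      rw [hcn1]
  -- Part 1
  have part1 : ∀ n, 1 ≤ n → c n + b n ≤ c (n+1) := by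
    intro n
    induction n using Nat.strong_induction_on with
    | _ n ih =>
      intro hn
      rcases Nat.eq_or_lt_of_le hn with h1 | h1
      · -- n = 1
        subst h1
        have hc2 := hc 2 (by omega)
        rw [show (2:ℕ) - 1 = 1 from rfl, hd2, hd1, if_pos rfl,
          show (2:ℕ) - 1 = 1 from rfl] at hc2
        show c 1 + b 1 ≤ c 2
        rw [hc2, hm 1, hh1, ha 1, hc1, hb1]
        norm_num
      · -- n ≥ 2
        have hn2 : 2 ≤ n := h1
        by_cases hcase : d (n+1) = d n
        · -- stay
          have hdn_le : d n + 1 ≤ n := hdle n hn2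
          have hd2n := hd2le n hn
          have hdp := hdpos n hn
          set e := n - d n with hedef
          have he1 : 1 ≤ e := by omega
          have he_lt : e < n := by omega
          have hen : n ≤ 2*e + 1 := by omega
          have hc_next := hc (n+1) (by omega)
          rw [Nat.add_sub_cancel, if_pos hcase] at hc_next
          have hidx2 : n + 1 - d (n+1) = e + 1 := by rw [hcase]; omega
          rw [hidx2] at hc_next
          have hSn : c n ≤ m e + b (n-1) := by rw [hedef]; exact hS n hn2
          have ihe := ih e he_lt he1
          have hb_n1 := hble (n-1) (by omega)
          have hb_n := hble n hn
          have key : m e + (b (n-1) + b n) ≤ m (e+1) := by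
            rw [hm e, hm (e+1), ha e, ha (e+1)]
            have h13e := h13 e he1
            have hX : 1 ≤ h e := hpos e he1
            have hbe := hbmono e he1
            have hb3e := hb3 e he1
            have e1 : c e + b e - 1 ≤ c (e+1) + b (e+1) - 1 := by omega
            have q1 : (2*e+2+1) * (c e + b e - 1)
                ≤ (2*(e+1)+2+1) * (c (e+1) + b (e+1) - 1) :=
              Nat.mul_le_mul (by omega) e1
            have q2 : (2*e+2) * h e + (4*e+5) ≤ (2*(e+1)+2) * h (e+1) := by
              calc (2*e+2) * h e + (4*e+5) ≤ (2*e+2) * h e + (4*e+5) * h e := by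
                    have : (4*e+5) * 1 ≤ (4*e+5) * h e := Nat.mul_le_mul_left _ hX
                    omega
                _ = (6*e+7) * h e := by ring
                _ ≤ ((2*(e+1)+2) * 13) * h e :=
                    Nat.mul_le_mul_right _ (by omega)
                _ = (2*(e+1)+2) * (13 * h e) := by ring
                _ ≤ (2*(e+1)+2) * h (e+1) := Nat.mul_le_mul_left _ h13e
            have hbb : b (n-1) + b n ≤ 4*e+5 := by omega
            calc (2*e+2) * h e + (2*e+2+1) * (c e + b e - 1) + (b (n-1) + b n)
                ≤ ((2*e+2) * h e + (4*e+5)) + (2*e+2+1) * (c e + b e - 1) := by omega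
              _ ≤ (2*(e+1)+2) * h (e+1) + (2*(e+1)+2+1) * (c (e+1) + b (e+1) - 1) :=
                  add_le_add q2 q1
          calc c n + b n ≤ (m e + b (n-1)) + b n := by omega
            _ = m e + (b (n-1) + b n) := by ring
            _ ≤ m (e+1) := key
            _ = c (n+1) := hc_next.symm
        · -- step
          have hstep := hdstep n hn
          have hc_next := hc (n+1) (by omega)
          rw [Nat.add_sub_cancel, if_neg hcase] at hc_next
          omega
  -- c is positive
  have cpos : ∀ n, 1 ≤ n → 1 ≤ c n := by
    intro n hn
    induction n with
    | zero => omega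
    | succ k ih =>
      rcases Nat.lt_or_ge 1 (k+1) with h1 | h1
      · have hk : 1 ≤ k := by omega
        have := part1 k hk
        have := hb3 k hk
        have := ih hk
        omega
      · rw [show k + 1 = 1 by omega, hc1]
  -- h n ≥ n + 1 for n ≥ 2
  have hhe : ∀ n, 2 ≤ n → n + 1 ≤ h n := by
    intro n hn
    induction n with
    | zero => omega
    | succ k ih =>
      rcases Nat.lt_or_ge k 2 with hk | hk
      · have : k = 1 := by omega
        subst this
        have := h13 1 le_rfl
        rw [hh1] at this
        omega
      · have h1 := ih hk
        have h2 := h13 k (by omega)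
        have h3 := hpos k (by omega)
        omega
  -- m e ≤ h (e+1)
  have hM : ∀ e, 1 ≤ e → m e ≤ h (e+1) := by
    intro e he
    rcases Nat.lt_or_ge e 2 with he2 | he2
    · have : e = 1 := by omega
      subst this
      rw [hm 1, hh 1 le_rfl, ha 1, hh1, hc1, hb1]
      norm_num
    · rw [hm e, hh e he, ha e]
      have hb3e := hb3 e he
      have hblee := hble e he
      have hce := cpos e he
      have hX := hpos e he
      have hXe : e + 1 ≤ h e := hhe e he2
      have hD : (2*e+2) * 3 ≤ (2*e+2) * b e := Nat.mul_le_mul_left _ hb3e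
      calc (2*e+2) * h e + (2*e+2+1) * (c e + b e - 1)
          ≤ (2*e+2) * h e + (2*e+2+1) * (c e + (e+1)) := by
            have h1 : c e + b e - 1 ≤ c e + (e+1) := by omega
            exact Nat.add_le_add_left (Nat.mul_le_mul_left _ h1) _
        _ = (2*e+2) * h e + ((2*e+3) * c e + (2*e+3) * (e+1)) := by ring
        _ ≤ (2*e+2) * h e + ((2*e+3) * c e + (2*e+3) * h e) :=
            Nat.add_le_add_left (Nat.add_le_add_left (Nat.mul_le_mul_left _ hXe) _) _
        _ = (4*e+5) * h e + (2*e+3) * c e := by ring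
        _ ≤ ((2*e+2) * b e + 1) * h e + (2*e+2) * b e * c e := by
            apply Nat.add_le_add
            · exact Nat.mul_le_mul_right _ (by omega)
            · exact Nat.mul_le_mul_right _ (by omega)
        _ ≤ ((2*e+2) * b e + 1) * h e + (2*e+2) * b e * c e + (2*e+2) * b e * (b e - 1) / 2 :=
            Nat.le_add_right _ _
  -- growth of h
  have hgrow : ∀ j, 1 ≤ j → ∀ s, (6*j)^s * h j ≤ h (j + s) := by
    intro j hj s
    induction s with
    | zero => simpa using le_refl (h j)
    | succ s ih =>
      have hjs : 1 ≤ j + s := by omega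
      have hstep : (6*j) * h (j+s) ≤ h (j+s+1) := by
        rw [hh (j+s) hjs, ha (j+s)]
        have hb := hb3 (j+s) hjs
        have hA : 6*j ≤ (2*(j+s)+2) * b (j+s) := by
          calc 6*j ≤ (2*(j+s)+2) * 3 := by omega
            _ ≤ (2*(j+s)+2) * b (j+s) := Nat.mul_le_mul_left _ hb
        have := Nat.mul_le_mul_right (h (j+s)) hA
        have h2 : ((2*(j+s)+2) * b (j+s)) * h (j+s) ≤ ((2*(j+s)+2) * b (j+s) + 1) * h (j+s) :=
          Nat.mul_le_mul_right _ (by omega)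
        omega
      calc (6*j)^(s+1) * h j = (6*j) * ((6*j)^s * h j) := by ring
        _ ≤ (6*j) * h (j+s) := Nat.mul_le_mul_left _ ih
        _ ≤ h (j+s+1) := hstep
        _ = h (j + (s+1)) := by rw [← Nat.add_assoc]
  -- Part 2
  have part2 : Tendsto (fun n => ((a n * b n ^ 2 : ℕ) : ℝ) / ((h n : ℕ) : ℝ)) atTop (nhds 0) := by
    have hub : ∀ n, 1 ≤ n → ((a n * b n^2 : ℕ):ℝ)/((h n:ℕ):ℝ) ≤ 832*((n:ℝ)^3*(1/13)^n) := by
      intro n hn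
      have hb2 : b n ^ 2 ≤ (n+2)^2 := Nat.pow_le_pow_left (hble n hn) 2
      have hnum : (a n * b n^2 : ℕ) ≤ 64 * n^3 := by
        rw [ha]
        calc (2*n+2) * b n ^ 2 ≤ (2*n+2) * (n+2)^2 := Nat.mul_le_mul_left _ hb2
          _ ≤ 64 * n^3 := by nlinarith [hn, Nat.mul_le_mul hn hn, Nat.mul_le_mul (Nat.mul_le_mul hn hn) hn]
      have hpw : ((13:ℝ))^(n-1) ≤ ((h n:ℕ):ℝ) := by exact_mod_cast hpow n hn
      have h13pos : (0:ℝ) < (13:ℝ)^(n-1) := by positivity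
      have heq : 832*((n:ℝ)^3*(1/13)^n) = (64*(n:ℝ)^3)/(13:ℝ)^(n-1) := by
        have h13n : (13:ℝ)^n = 13 * 13^(n-1) := by
          rw [← pow_succ']
          congr 1
          omega
        rw [one_div, inv_pow, h13n]
        field_simp
        ring
      rw [heq]
      apply div_le_div₀ (by positivity) (by exact_mod_cast hnum) h13pos hpw
    have h0 : Tendsto (fun n : ℕ => 832*((n:ℝ)^3*(1/13)^n)) atTop (nhds 0) := by
      have hs : Summable (fun n : ℕ => (n:ℝ)^3 * (1/13)^n) :=
        summable_pow_mul_geometric_of_norm_lt_one 3 (by rw [Real.norm_eq_abs, abs_of_pos] <;> norm_num)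
      have := (hs.tendsto_atTop_zero).const_mul (832:ℝ)
      simpa using this
    apply tendsto_of_tendsto_of_tendsto_of_le_of_le' tendsto_const_nhds h0
    · filter_upwards with n
      positivity
    · filter_upwards [eventually_ge_atTop 1] with n hn using hub n hn
  refine ⟨part1, part2, ?_⟩
  -- Part 3
  obtain ⟨N0, hN0⟩ := Filter.eventually_atTop.mp (hdtop.eventually_ge_atTop 3)
  set N := N0 + 2 with hNdef
  have hbound3 : ∀ n, N ≤ n → ((c n + b n : ℕ):ℝ) / ((h n : ℕ):ℝ)
      ≤ 1/(9*(n:ℝ)^2) + 65*(n:ℝ)*(1/13:ℝ)^n := by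
    intro n hn
    have hn2 : 2 ≤ n := by omega
    have hd3 : 3 ≤ d n := hN0 n (by omega)
    have hdn_le : d n + 1 ≤ n := hdle n hn2
    have hd2n := hd2le n (by omega)
    set e := n - d n with hedef
    have he1 : 1 ≤ e := by omega
    have hgr := hgrow (e+1) (by omega) (d n - 1)
    have hidx : e + 1 + (d n - 1) = n := by omega
    rw [hidx] at hgr
    have hp2 : (6*(e+1))^2 ≤ (6*(e+1))^(d n - 1) :=
      Nat.pow_le_pow_right (by omega) (by omega)
    have h9 : 9 * n^2 ≤ (6*(e+1))^2 := by
      have h2e : n ≤ 2*(e+1) := by omega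
      calc 9 * n^2 ≤ 9 * (2*(e+1))^2 := Nat.mul_le_mul_left _ (Nat.pow_le_pow_left h2e 2)
        _ = (6*(e+1))^2 := by ring
    have hnat : 9 * n^2 * h (e+1) ≤ h n :=
      le_trans (Nat.mul_le_mul_right _ (le_trans h9 hp2)) hgr
    have hMn : m e ≤ h (e+1) := hM e he1
    have hSn : c n ≤ m e + b (n-1) := by rw [hedef]; exact hS n hn2
    have hcb : c n + b n ≤ h (e+1) + (2*n+3) := by
      have q1 := hble (n-1) (by omega)
      have q2 := hble n (by omega)
      omega
    have hhnpos : (0:ℝ) < ((h n : ℕ):ℝ) := by exact_mod_cast hpos n (by omega)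
    have step1 : ((c n + b n : ℕ):ℝ)/((h n:ℕ):ℝ)
        ≤ ((h (e+1):ℕ):ℝ)/((h n:ℕ):ℝ) + ((2*n+3:ℕ):ℝ)/((h n:ℕ):ℝ) := by
      rw [← add_div]
      apply (div_le_div_iff_of_pos_right hhnpos).mpr
      exact_mod_cast hcb
    have t1 : ((h (e+1):ℕ):ℝ)/((h n:ℕ):ℝ) ≤ 1/(9*(n:ℝ)^2) := by
      rw [div_le_div_iff₀ hhnpos (by positivity)]
      have hr : ((9 * n^2 * h (e+1) : ℕ):ℝ) ≤ ((h n:ℕ):ℝ) := by exact_mod_cast hnat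
      push_cast at hr
      nlinarith [hr]
    have t2 : ((2*n+3:ℕ):ℝ)/((h n:ℕ):ℝ) ≤ 65*(n:ℝ)*(1/13:ℝ)^n := by
      have hpw : ((13:ℝ))^(n-1) ≤ ((h n:ℕ):ℝ) := by exact_mod_cast hpow n (by omega)
      have h13pos : (0:ℝ) < (13:ℝ)^(n-1) := by positivity
      have hA : ((2*n+3:ℕ):ℝ)/((h n:ℕ):ℝ) ≤ ((2*n+3:ℕ):ℝ)/(13:ℝ)^(n-1) :=
        div_le_div_of_nonneg_left (by positivity) h13pos hpw
      apply hA.trans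
      have h13n : (13:ℝ)^n = 13 * 13^(n-1) := by
        rw [← pow_succ']
        congr 1
        omega
      rw [div_le_iff₀ h13pos, one_div, inv_pow, mul_assoc]
      rw [show ((13:ℝ)^n)⁻¹ * (13:ℝ)^(n-1) = 1/13 by rw [h13n]; field_simp]
      push_cast
      have : (1:ℝ) ≤ (n:ℝ) := by exact_mod_cast (by omega : 1 ≤ n)
      nlinarith [this]
    calc ((c n + b n : ℕ):ℝ)/((h n:ℕ):ℝ)
        ≤ ((h (e+1):ℕ):ℝ)/((h n:ℕ):ℝ) + ((2*n+3:ℕ):ℝ)/((h n:ℕ):ℝ) := step1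
      _ ≤ 1/(9*(n:ℝ)^2) + 65*(n:ℝ)*(1/13:ℝ)^n := add_le_add t1 t2
  have hgsum : Summable (fun n : ℕ => 1/(9*(n:ℝ)^2) + 65*(n:ℝ)*(1/13:ℝ)^n) := by
    apply Summable.add
    · have h1 : Summable (fun n : ℕ => 1/(n:ℝ)^2) := Real.summable_one_div_nat_pow.mpr (by norm_num)
      have := h1.div_const 9
      apply this.congr
      intro n
      rw [div_div]
      ring_nf
    · have hs : Summable (fun n : ℕ => (n:ℝ)^1 * (1/13)^n) :=
        summable_pow_mul_geometric_of_norm_lt_one 1 (by rw [Real.norm_eq_abs, abs_of_pos] <;> norm_num)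
      have := hs.mul_left 65
      apply this.congr
      intro n
      ring
  have htail : Summable (fun n : ℕ => (((c (n+N) + b (n+N) : ℕ)) : ℝ) / ((h (n+N) : ℕ) : ℝ)) := by
    apply Summable.of_nonneg_of_le (fun n => by positivity)
      (fun n => hbound3 (n+N) (by omega))
    exact (summable_nat_add_iff N).mpr hgsum
  exact (summable_nat_add_iff N).mp htail
end
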